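/- arXiv:1709.04357 — 3 statements merged into one kernel-verified Lean document; each statement's English description precedes it below -/
import Mathlib

section
/- Fix 0<q<1. For every integer m≥1 and every q ∈ (0,1), (Θ^m P_0)(q) = −3 P_0(q) P_m(q). Moreover, for each m≥1 there is a multivariate polynomial with rational coefficients, independent of q, expressing P_m(q) as a polynomial in A_0(q), A_1(q), …, A_{m−1}(q). -/
/-- `A i (q) = Σ_{m≥1} m^i σ(m) q^m` where `σ(m)` is the sum of positive divisors of `m`. -/
noncomputable def A (q : ℝ) (i : ℕ) : ℝ :=
  ∑' m : ℕ, (m : ℝ) ^ i * (∑ d ∈ Nat.divisors m, (d : ℝ)) * q ^ m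

/-- Ramanujan's theta operator `(Θg)(q) = q·g'(q)`. -/
noncomputable def Theta (g : ℝ → ℝ) : ℝ → ℝ := fun q => q * deriv g q

/-- `P_0(q) = Σ_{j≥1} (-1)^{j-1} (2j-1) q^{j(j-1)/2}` (reindexed over `j ≥ 0`). -/
noncomputable def P0 (q : ℝ) : ℝ :=
  ∑' j : ℕ, (-1 : ℝ) ^ j * (2 * (j : ℝ) + 1) * q ^ (j * (j + 1) / 2)

/-- `P_1 = A_0` and `P_{m+1} = Θ(P_m) - 3 A_0 P_m`. -/
noncomputable def Pm : ℕ → ℝ → ℝ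
  | 0 => fun _ => 0
  | 1 => fun q => A q 0
  | m + 2 => fun q => Theta (Pm (m + 1)) q - 3 * A q 0 * Pm (m + 1) q


open Polynomial Finset

namespace Jac

noncomputable def gb : ℕ → ℕ → Polynomial ℤ
  | _, 0 => 1
  | 0, _ + 1 => 0
  | M + 1, j + 1 => X ^ (j + 1) * gb M (j + 1) + gb M j

@[simp] lemma gb_zero_right (M : ℕ) : gb M 0 = 1 := by cases M <;> rfl

lemma gb_succ_succ (M j : ℕ) :
    gb (M + 1) (j + 1) = X ^ (j + 1) * gb M (j + 1) + gb M j := rfl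

lemma gb_eq_zero : ∀ {M j : ℕ}, M < j → gb M j = 0
  | 0, _ + 1, _ => rfl
  | M + 1, j + 1, h => by
    rw [gb_succ_succ, gb_eq_zero (by omega : M < j + 1), gb_eq_zero (by omega : M < j)]
    ring

@[simp] lemma gb_self : ∀ M : ℕ, gb M M = 1
  | 0 => rfl
  | M + 1 => by
    rw [gb_succ_succ, gb_eq_zero (by omega : M < M + 1), gb_self M]; ring

lemma gb_one_succ : ∀ M : ℕ, gb (M + 1) 1 = gb M 1 + X ^ M
  | 0 => by rw [gb_succ_succ]; simp [gb_eq_zero]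
  | M + 1 => by
    have d2 : gb (M + 2) 1 = X ^ 1 * gb (M + 1) 1 + gb (M + 1) 0 := gb_succ_succ (M + 1) 0
    have d1 : gb (M + 1) 1 = X ^ 1 * gb M 1 + gb M 0 := gb_succ_succ M 0
    have ih := gb_one_succ M
    rw [gb_zero_right] at d1 d2
    linear_combination d2 + X ^ 1 * ih - d1

/-- The other `q`-Pascal rule. -/
lemma gb_pascal : ∀ M j : ℕ, j ≤ M →
    gb (M + 1) (j + 1) = gb M (j + 1) + X ^ (M - j) * gb M j := by
  intro M
  induction M with
  | zero =>
    intro j hj; interval_cases j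
    simp [gb_succ_succ, gb_eq_zero]
  | succ M ih =>
    intro j hj
    match j with
    | 0 => simpa using gb_one_succ (M + 1)
    | i + 1 =>
      have hiM : i ≤ M := by omega
      have e : M + 1 + 1 - (i + 1) = M - i + 1 := by omega
      rcases Nat.eq_or_lt_of_le hiM with h | h
      · subst h
        rw [gb_self, gb_eq_zero (by omega : i + 1 < i + 2), gb_self]
        simp
      · have hi1M : i + 1 ≤ M := by omega
        have d1 : gb (M + 2) (i + 2) = X ^ (i + 2) * gb (M + 1) (i + 2) + gb (M + 1) (i + 1) :=
          gb_succ_succ (M + 1) (i + 1)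
        have d2 : gb (M + 1) (i + 2) = X ^ (i + 2) * gb M (i + 2) + gb M (i + 1) :=
          gb_succ_succ M (i + 1)
        have d3 : gb (M + 1) (i + 1) = X ^ (i + 1) * gb M (i + 1) + gb M i :=
          gb_succ_succ M i
        have p1 : gb (M + 1) (i + 2) = gb M (i + 2) + X ^ (M - (i + 1)) * gb M (i + 1) :=
          ih (i + 1) hi1M
        have p2 : gb (M + 1) (i + 1) = gb M (i + 1) + X ^ (M - i) * gb M i := ih i hiM
        have q1 : (X : Polynomial ℤ) ^ (i + 2) * X ^ (M - (i + 1)) = X ^ (M + 1) := by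
          rw [← pow_add]; congr 1; omega
        have q2 : (X : Polynomial ℤ) ^ (M - i) * X ^ (i + 1) = X ^ (M + 1) := by
          rw [← pow_add]; congr 1; omega
        have e2 : M + 1 - (i + 1) = M - i := by omega
        rw [e2]
        linear_combination d1 + X ^ (i + 2) * p1 - d2 + p2 - X ^ (M - i) * d3 +
          gb M (i + 1) * (q1 - q2)

lemma gb_symm : ∀ M a : ℕ, a ≤ M → gb M (M - a) = gb M a := by
  intro M
  induction M with
  | zero => intro a ha; interval_cases a; rfl
  | succ M ih =>
    intro a ha
    match a with
    | 0 => simp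
    | b + 1 =>
      have hbM : b ≤ M := by omega
      rcases Nat.eq_or_lt_of_le hbM with h | h
      · subst h
        simp [gb_eq_zero (by omega : b < b + 1)]
      · have e : M + 1 - (b + 1) = (M - (b + 1)) + 1 := by omega
        rw [gb_succ_succ, e, gb_pascal M (M - (b + 1)) (by omega)]
        have e1 : M - (M - (b + 1)) = b + 1 := by omega
        have e2 : M - (b + 1) + 1 = M - b := by omega
        rw [e1, e2, ih b hbM, ih (b + 1) (by omega)]
        ring

/-- Product formula. -/
lemma gb_prod : ∀ M a : ℕ, a ≤ M →
    gb M a * ∏ i ∈ range a, (1 - X ^ (i + 1)) =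
      ∏ i ∈ range a, (1 - (X : Polynomial ℤ) ^ (M - a + i + 1)) := by
  intro M
  induction M with
  | zero => intro a ha; interval_cases a; simp
  | succ M ih =>
    intro a ha
    match a with
    | 0 => simp
    | b + 1 =>
      have hbM : b ≤ M := by omega
      rw [gb_pascal M b hbM]
      rcases Nat.eq_or_lt_of_le hbM with h | h
      · subst h
        rw [gb_eq_zero (by omega : b < b + 1), gb_self]
        have : ∀ i ∈ range (b + 1),
            (1 - (X : Polynomial ℤ) ^ (b + 1 - (b + 1) + i + 1)) = 1 - X ^ (i + 1) := by
          intro i _; congr 2; omega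
        rw [Finset.prod_congr rfl this, Nat.sub_self, pow_zero]
        ring
      · have hb1M : b + 1 ≤ M := by omega
        have ih1 := ih (b + 1) hb1M
        have ih2 := ih b hbM
        set W : Polynomial ℤ := ∏ i ∈ range b, (1 - X ^ (M - b + i + 1)) with hW
        -- rewrite ih1's RHS as (1 - X^(M-b)) * W
        have h1 : gb M (b + 1) * ∏ i ∈ range (b + 1), (1 - X ^ (i + 1)) =
            (1 - X ^ (M - b)) * W := by
          rw [ih1, Finset.prod_range_succ']
          have hc : ∀ i ∈ range b,
              (1 - (X : Polynomial ℤ) ^ (M - (b + 1) + (i + 1) + 1)) = 1 - X ^ (M - b + i + 1) := by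
            intro i _; congr 2; omega
          rw [Finset.prod_congr rfl hc]
          have hc0 : M - (b + 1) + 0 + 1 = M - b := by omega
          rw [hc0, mul_comm]
        have dp : (∏ i ∈ range (b + 1), (1 - (X : Polynomial ℤ) ^ (i + 1))) =
            (∏ i ∈ range b, (1 - X ^ (i + 1))) * (1 - X ^ (b + 1)) := Finset.prod_range_succ _ _
        have htarget : (∏ i ∈ range (b + 1), (1 - (X : Polynomial ℤ) ^ (M + 1 - (b + 1) + i + 1))) =
            W * (1 - X ^ (M + 1)) := by
          rw [Finset.prod_range_succ]
          have hc : ∀ i ∈ range b,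
              (1 - (X : Polynomial ℤ) ^ (M + 1 - (b + 1) + i + 1)) = 1 - X ^ (M - b + i + 1) := by
            intro i _; congr 2; omega
          rw [Finset.prod_congr rfl hc]
          have e5 : M + 1 - (b + 1) + b + 1 = M + 1 := by omega
          rw [e5]
        have q : (X : Polynomial ℤ) ^ (M - b) * X ^ (b + 1) = X ^ (M + 1) := by
          rw [← pow_add]; congr 1; omega
        rw [htarget]
        linear_combination h1 + X ^ (M - b) * (1 - X ^ (b + 1)) * ih2 + X ^ (M - b) * gb M b * dp - W * q



lemma gb_double (M j : ℕ) (h : j ≤ M) :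
    gb (M + 2) (j + 2) = X ^ (j + 2) * gb M (j + 2) + (1 + X ^ (M + 1)) * gb M (j + 1)
      + X ^ (M - j) * gb M j := by
  have d1 : gb (M + 2) (j + 2) = gb (M + 1) (j + 2) + X ^ (M + 1 - (j + 1)) * gb (M + 1) (j + 1) :=
    gb_pascal (M + 1) (j + 1) (by omega)
  have e1 : M + 1 - (j + 1) = M - j := by omega
  rw [e1] at d1
  have d2 : gb (M + 1) (j + 2) = X ^ (j + 2) * gb M (j + 2) + gb M (j + 1) := gb_succ_succ M (j + 1)
  have d3 : gb (M + 1) (j + 1) = X ^ (j + 1) * gb M (j + 1) + gb M j := gb_succ_succ M j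
  have q : (X : Polynomial ℤ) ^ (M - j) * X ^ (j + 1) = X ^ (M + 1) := by
    rw [← pow_add]; congr 1; omega
  linear_combination d1 + d2 + X ^ (M - j) * d3 + gb M (j + 1) * q

lemma gb_one_double (M : ℕ) : gb (M + 2) 1 = X * gb M 1 + 1 + X ^ (M + 1) := by
  have d1 : gb (M + 2) 1 = X ^ 1 * gb (M + 1) 1 + gb (M + 1) 0 := gb_succ_succ (M + 1) 0
  have d2 := gb_one_succ M
  rw [gb_zero_right] at d1
  rw [d1, d2]; ring

/-- `tri x = x(x+1)/2` as a natural number, for integer `x`. -/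
noncomputable def tri (x : ℤ) : ℕ := (x * (x + 1) / 2).toNat

lemma tri_eq (x : ℤ) : 2 * (tri x : ℤ) = x * (x + 1) := by
  have hnn : 0 ≤ x * (x + 1) := by nlinarith [sq_nonneg (2 * x + 1)]
  have hev : (2 : ℤ) ∣ x * (x + 1) := (Int.even_mul_succ_self x).two_dvd
  obtain ⟨k, hk⟩ := hev
  rw [tri, hk, Int.mul_ediv_cancel_left _ (by norm_num)]
  rw [hk] at hnn
  rw [Int.toNat_of_nonneg (by omega)]

lemma tri_succ (x : ℤ) : (tri (x + 1) : ℤ) = (tri x : ℤ) + x + 1 := by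
  have h1 := tri_eq (x + 1)
  have h2 := tri_eq x
  have e : (x + 1) * (x + 1 + 1) = x * (x + 1) + 2 * x + 2 := by ring
  rw [e] at h1
  set y := x * (x + 1) with hy
  omega

lemma tri_neg (x : ℤ) : tri (-(x + 1)) = tri x := by
  have h1 := tri_eq (-(x + 1))
  have h2 := tri_eq x
  have e : (-(x + 1)) * (-(x + 1) + 1) = x * (x + 1) := by ring
  rw [e] at h1
  set y := x * (x + 1) with hy
  omega

lemma tri_nat (i : ℕ) : tri (i : ℤ) = i * (i + 1) / 2 := by
  have h1 := tri_eq (i : ℤ)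
  have hd : 2 ∣ i * (i + 1) := (Nat.even_mul_succ_self i).two_dvd
  have h2 : i * (i + 1) / 2 * 2 = i * (i + 1) := Nat.div_mul_cancel hd
  set n := i * (i + 1) with hn
  have hb : (n : ℤ) = 2 * (tri (i : ℤ) : ℤ) := by rw [hn]; push_cast; linarith
  omega

/-- The exponent in the finite Jacobi triple product. -/
noncomputable def ee (m j : ℕ) : ℕ := tri ((j : ℤ) - m)

lemma ee_eq (m j : ℕ) (x : ℤ) (h : (j : ℤ) - m = x) : ee m j = tri x := by rw [ee, h]

noncomputable def ccQ (m j : ℕ) : Polynomial ℤ := gb (2 * m) j * X ^ (ee m j)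

lemma ccQ_zero_of_lt (m j : ℕ) (h : 2 * m < j) : ccQ m j = 0 := by
  rw [ccQ, gb_eq_zero h, zero_mul]

/-- coefficient recurrence, case `j = 0`. -/
lemma ccQ_rec_zero (m : ℕ) : ccQ (m + 1) 0 = X ^ m * ccQ m 0 := by
  unfold ccQ
  rw [gb_zero_right, gb_zero_right]
  have a1 : ee (m + 1) 0 = tri (-(((m : ℤ) - 1) + 1 + 1)) := ee_eq _ _ _ (by push_cast; ring)
  have a2 : ee m 0 = tri (-(((m : ℤ) - 1) + 1)) := ee_eq _ _ _ (by push_cast; ring)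
  rw [a1, a2, tri_neg, tri_neg]
  have h := tri_succ ((m : ℤ) - 1)
  have hee : tri ((m : ℤ) - 1 + 1) = m + tri ((m : ℤ) - 1) := by omega
  rw [hee, pow_add]; ring

lemma ccQ_rec_one (m : ℕ) :
    ccQ (m + 1) 1 = X ^ m * ccQ m 1 + (1 + X ^ (2 * m + 1)) * ccQ m 0 := by
  unfold ccQ
  have hgb : gb (2 * (m + 1)) 1 = X * gb (2 * m) 1 + 1 + X ^ (2 * m + 1) := by
    rw [show 2 * (m + 1) = 2 * m + 2 by ring]
    exact gb_one_double (2 * m)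
  have a1 : ee (m + 1) 1 = tri (-(((m : ℤ) - 2 + 1) + 1)) := ee_eq _ _ _ (by push_cast; ring)
  have a2 : ee m 1 = tri (-(((m : ℤ) - 2) + 1)) := ee_eq _ _ _ (by push_cast; ring)
  have a3 : ee m 0 = tri (-(((m : ℤ) - 2 + 1) + 1)) := ee_eq _ _ _ (by push_cast; ring)
  rw [a1, a2, a3]; simp only [tri_neg]
  have h := tri_succ ((m : ℤ) - 2)
  have hee : tri ((m : ℤ) - 2 + 1) + 1 = tri ((m : ℤ) - 2) + m := by omega
  rw [hgb, gb_zero_right]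
  have k1 : (X : Polynomial ℤ) * X ^ (tri ((m:ℤ) - 2 + 1)) = X ^ m * X ^ (tri ((m:ℤ) - 2)) := by
    rw [show (X : Polynomial ℤ) * X ^ (tri ((m:ℤ) - 2 + 1)) = X ^ (tri ((m:ℤ) - 2 + 1) + 1) by
      rw [pow_succ]; ring, hee, pow_add]
    ring
  calc (X * gb (2*m) 1 + 1 + X ^ (2*m+1)) * X ^ (tri ((m:ℤ) - 2 + 1))
      = gb (2*m) 1 * (X * X ^ (tri ((m:ℤ) - 2 + 1)))
        + (1 + X ^ (2*m+1)) * (1 * X ^ (tri ((m:ℤ) - 2 + 1))) := by ring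
    _ = _ := by rw [k1]; ring

lemma ccQ_rec_two (m i : ℕ) (hi : i ≤ 2 * m) :
    ccQ (m + 1) (i + 2) = X ^ m * ccQ m (i + 2) + (1 + X ^ (2 * m + 1)) * ccQ m (i + 1)
      + X ^ (m + 1) * ccQ m i := by
  unfold ccQ
  have hgb : gb (2 * (m + 1)) (i + 2) = X ^ (i + 2) * gb (2 * m) (i + 2)
      + (1 + X ^ (2 * m + 1)) * gb (2 * m) (i + 1) + X ^ (2 * m - i) * gb (2 * m) i := by
    rw [show 2 * (m + 1) = 2 * m + 2 by ring]
    exact gb_double (2 * m) i hi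
  set x : ℤ := (i : ℤ) + 1 - m with hx
  have a1 : ee (m + 1) (i + 2) = tri x := ee_eq _ _ _ (by rw [hx]; push_cast; ring)
  have a2 : ee m (i + 2) = tri (x + 1) := ee_eq _ _ _ (by rw [hx]; push_cast; ring)
  have a3 : ee m (i + 1) = tri x := ee_eq _ _ _ (by rw [hx]; push_cast; ring)
  have a4 : ee m i = tri (x - 1 + 1 - 1) := ee_eq _ _ _ (by rw [hx]; push_cast; ring)
  have a4' : ee m i = tri (x - 1) := by rw [a4]; congr 1; ring
  have h1 := tri_succ x
  have h2 := tri_succ (x - 1)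
  rw [show x - 1 + 1 = x by ring] at h2
  have hE1 : tri x + (i + 2) = tri (x + 1) + m := by omega
  have hE3 : tri x + (2 * m - i) = tri (x - 1) + (m + 1) := by omega
  rw [hgb, a1, a2, a3, a4']
  have k1 : (X:Polynomial ℤ) ^ (i + 2) * X ^ (tri x) = X ^ m * X ^ (tri (x + 1)) := by
    rw [← pow_add, ← pow_add]; congr 1; omega
  have k3 : (X:Polynomial ℤ) ^ (2 * m - i) * X ^ (tri x) = X ^ (m + 1) * X ^ (tri (x - 1)) := by
    rw [← pow_add, ← pow_add]; congr 1; omega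
  linear_combination gb (2 * m) (i + 2) * k1 + gb (2 * m) i * k3


noncomputable def aQ (m j : ℕ) : Polynomial ℤ := (-1) ^ j * ccQ m j

lemma aQ_zero_of_lt (m j : ℕ) (h : 2 * m < j) : aQ m j = 0 := by
  rw [aQ, ccQ_zero_of_lt m j h, mul_zero]

/-- Shift a coefficient sequence. -/
noncomputable def sh (f : ℕ → Polynomial ℤ) : ℕ → Polynomial ℤ
  | 0 => 0
  | j + 1 => f j

/-- The finite Jacobi triple product, LHS. Lives in `(ℤ[q])[t]` with `t` the outer variable. -/
noncomputable def LA (m : ℕ) : Polynomial (Polynomial ℤ) :=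
  (∏ i ∈ range m, (C (X ^ i) - X)) * ∏ i ∈ range m, (1 - C (X ^ (i + 1)) * X)

noncomputable def SA (m : ℕ) : Polynomial (Polynomial ℤ) :=
  ∑ j ∈ range (2 * m + 1), C (aQ m j) * X ^ j

lemma sum_extend (n k : ℕ) (a : ℕ → Polynomial ℤ) (h : ∀ j, n ≤ j → a j = 0) :
    ∑ j ∈ range n, C (a j) * X ^ j = ∑ j ∈ range (n + k), C (a j) * X ^ j := by
  apply Finset.sum_subset (Finset.range_subset_range.mpr (by omega))
  intro j _ hj
  rw [h j (by simpa using hj), map_zero, zero_mul]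

lemma sum_shift (n : ℕ) (a : ℕ → Polynomial ℤ) :
    (∑ j ∈ range n, C (a j) * X ^ j) * X =
      ∑ j ∈ range (n + 1), C (sh a j) * X ^ j := by
  rw [Finset.sum_mul, Finset.sum_range_succ']
  have h0 : C (sh a 0) * (X : Polynomial (Polynomial ℤ)) ^ 0 = 0 := by
    show C 0 * _ = 0
    rw [map_zero, zero_mul]
  rw [h0, add_zero]
  apply Finset.sum_congr rfl
  intro j _
  show C (a j) * X ^ j * X = C (a j) * X ^ (j + 1)
  rw [pow_succ]
  ring

lemma aQ_rec (m : ℕ) : ∀ j, aQ (m + 1) j = X ^ m * aQ m j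
      - (1 + X ^ (2 * m + 1)) * sh (aQ m) j + X ^ (m + 1) * sh (sh (aQ m)) j
  | 0 => by
    show aQ (m + 1) 0 = X ^ m * aQ m 0 - (1 + X ^ (2*m+1)) * 0 + X ^ (m+1) * 0
    unfold aQ
    rw [ccQ_rec_zero]; ring
  | 1 => by
    show aQ (m + 1) 1 = X ^ m * aQ m 1 - (1 + X ^ (2*m+1)) * aQ m 0 + X ^ (m+1) * 0
    unfold aQ
    rw [ccQ_rec_one]; ring
  | (i + 2) => by
    show aQ (m + 1) (i+2) = X ^ m * aQ m (i+2) - (1 + X ^ (2*m+1)) * aQ m (i+1)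
      + X ^ (m+1) * aQ m i
    rcases le_or_gt i (2 * m) with h | h
    · unfold aQ
      rw [ccQ_rec_two m i h]
      ring
    · rw [aQ_zero_of_lt (m+1) (i+2) (by omega), aQ_zero_of_lt m (i+2) (by omega),
        aQ_zero_of_lt m (i+1) (by omega), aQ_zero_of_lt m i (by omega)]
      ring

/-- The finite Jacobi triple product identity. -/
lemma claimA : ∀ m : ℕ, LA m = SA m := by
  intro m
  induction m with
  | zero =>
    have h0 : ee 0 0 = tri 0 := ee_eq _ _ _ (by norm_num)
    have h1 := tri_eq 0
    norm_num at h1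
    simp [LA, SA, aQ, ccQ, h0, h1]
  | succ m ih =>
    have hLA : LA (m + 1) = LA m * ((C (X ^ m) - X) * (1 - C (X ^ (m + 1)) * X)) := by
      unfold LA
      rw [Finset.prod_range_succ, Finset.prod_range_succ
        (fun i => 1 - C ((X:Polynomial ℤ) ^ (i + 1)) * X)]
      ring
    set n := 2 * m + 1 with hn
    have h1 : SA m * C ((X:Polynomial ℤ) ^ m) =
        ∑ j ∈ range (n + 2), C (X ^ m * aQ m j) * X ^ j := by
      rw [SA, Finset.sum_mul]
      have hc : ∀ j ∈ range (2 * m + 1),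
          (C (aQ m j) * X ^ j) * C ((X:Polynomial ℤ) ^ m) = C (X ^ m * aQ m j) * X ^ j := by
        intro j _
        rw [mul_right_comm, ← C_mul, mul_comm (aQ m j) (X ^ m)]
      rw [Finset.sum_congr rfl hc, ← hn]
      exact sum_extend n 2 _ (fun j hj => by
        rw [aQ_zero_of_lt m j (by omega), mul_zero])
    have h2 : SA m * X = ∑ j ∈ range (n + 1), C (sh (aQ m) j) * X ^ j := by
      rw [SA, ← hn, sum_shift]
    have h2' : SA m * X = ∑ j ∈ range (n + 2), C (sh (aQ m) j) * X ^ j := by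
      rw [h2]
      refine sum_extend (n+1) 1 _ (fun j hj => ?_)
      match j, hj with
      | j + 1, hj => exact aQ_zero_of_lt m j (by omega)
    have h3 : (SA m * X) * X = ∑ j ∈ range (n + 2), C (sh (sh (aQ m)) j) * X ^ j := by
      rw [h2, sum_shift]
    have expand : SA (m+1) = SA m * ((C (X ^ m) - X) * (1 - C (X ^ (m + 1)) * X)) := by
      have key : SA m * ((C (X ^ m) - X) * (1 - C (X ^ (m + 1)) * X)) =
          SA m * C ((X:Polynomial ℤ) ^ m) - (1 + C ((X:Polynomial ℤ) ^ (2*m+1))) * (SA m * X)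
            + C ((X:Polynomial ℤ) ^ (m+1)) * ((SA m * X) * X) := by
        have hC : C ((X:Polynomial ℤ) ^ (2*m+1)) = C ((X:Polynomial ℤ) ^ m) * C ((X:Polynomial ℤ) ^ (m+1)) := by
          rw [← C_mul, ← pow_add]
          congr 2
          omega
        rw [hC]; ring
      rw [key, h3, h1, h2', Finset.mul_sum, Finset.mul_sum, ← Finset.sum_sub_distrib,
        ← Finset.sum_add_distrib]
      rw [SA]
      have hrange : 2 * (m + 1) + 1 = n + 2 := by omega
      rw [hrange]
      apply Finset.sum_congr rfl
      intro j _
      rw [aQ_rec m j]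
      simp only [map_mul, map_add, map_sub, map_one, map_pow]
      ring
    rw [hLA, ih, ← expand]

noncomputable def DD (k : ℕ) : Polynomial ℤ := ∏ i ∈ range k, (1 - (X:Polynomial ℤ) ^ (i + 1))

noncomputable def wpol (m i : ℕ) : Polynomial ℤ :=
  C ((m : ℤ) + i) * gb (2 * m) (m + i) - C ((m : ℤ) - 1 - i) * gb (2 * m) (m + 1 + i)

lemma neg_one_pow_congr {a b : ℕ} (h : a % 2 = b % 2) :
    ((-1 : Polynomial ℤ)) ^ a = (-1) ^ b := by
  rcases Nat.even_or_odd a with he | ho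
  · have hb : Even b := Nat.even_iff.mpr (by rw [Nat.even_iff] at he; omega)
    rw [he.neg_one_pow, hb.neg_one_pow]
  · have hb : Odd b := Nat.odd_iff.mpr (by rw [Nat.odd_iff] at ho; omega)
    rw [ho.neg_one_pow, hb.neg_one_pow]

lemma derivSA (m : ℕ) : eval 1 (derivative (SA m)) =
    ∑ j ∈ range (2 * m + 1), (j : Polynomial ℤ) * aQ m j := by
  rw [SA, map_sum, Polynomial.eval_finset_sum]
  apply Finset.sum_congr rfl
  intro j _
  rw [Polynomial.derivative_C_mul, Polynomial.derivative_X_pow]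
  simp only [eval_mul, eval_C, eval_pow, eval_X, one_pow, mul_one]
  ring

lemma derivLA (m : ℕ) : eval 1 (derivative (LA (m + 1))) =
    -((∏ i ∈ range m, ((X:Polynomial ℤ) ^ (i + 1) - 1)) *
      ∏ i ∈ range (m + 1), (1 - (X:Polynomial ℤ) ^ (i + 1))) := by
  have hsplit : LA (m + 1) = (1 - X) *
      ((∏ i ∈ range m, (C ((X:Polynomial ℤ) ^ (i + 1)) - X)) *
        ∏ i ∈ range (m + 1), (1 - C ((X:Polynomial ℤ) ^ (i + 1)) * X)) := by
    rw [LA, Finset.prod_range_succ' (fun i => C ((X:Polynomial ℤ) ^ i) - X)]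
    simp only [pow_zero, map_one]
    ring
  have h1 : eval 1 (derivative (1 - X : Polynomial (Polynomial ℤ))) = -1 := by
    rw [derivative_sub, derivative_one, derivative_X]; simp
  have h2 : eval (1 : Polynomial ℤ) (1 - X) = 0 := by simp
  have e1 : ∀ i ∈ range m, eval (1 : Polynomial ℤ) (C ((X:Polynomial ℤ) ^ (i+1)) - X) =
      (X:Polynomial ℤ) ^ (i + 1) - 1 := by intro i _; simp
  have e2 : ∀ i ∈ range (m + 1), eval (1 : Polynomial ℤ) (1 - C ((X:Polynomial ℤ) ^ (i+1)) * X) =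
      1 - (X:Polynomial ℤ) ^ (i + 1) := by intro i _; simp
  rw [hsplit]
  simp only [derivative_mul, eval_add, eval_mul, h1, h2, zero_mul, add_zero, mul_zero]
  rw [Polynomial.eval_prod, Polynomial.eval_prod, Finset.prod_congr rfl e1,
    Finset.prod_congr rfl e2]
  ring

lemma prod_sign (m : ℕ) : ∏ i ∈ range m, ((X:Polynomial ℤ) ^ (i + 1) - 1) =
    (-1) ^ m * ∏ i ∈ range m, (1 - (X:Polynomial ℤ) ^ (i + 1)) := by
  induction m with
  | zero => simp
  | succ m ih => rw [Finset.prod_range_succ, Finset.prod_range_succ, ih]; ring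

/-- combination of `claimA` with the derivative-at-one evaluation. -/
lemma identity1 (m : ℕ) : ∑ j ∈ range (2 * (m+1) + 1), (j : Polynomial ℤ) * aQ (m+1) j =
    (-1) ^ (m + 1) * (DD m * DD (m + 1)) := by
  have h := congrArg (fun p => eval (1 : Polynomial ℤ) (derivative p)) (claimA (m + 1))
  rw [derivLA, derivSA] at h
  rw [← h, prod_sign, DD, DD]
  ring

lemma ee_mid (m i : ℕ) : ee m (m + i) = tri (i : ℤ) :=
  ee_eq _ _ _ (by push_cast; ring)

lemma aQ_top (m : ℕ) : aQ m (2 * m) = X ^ (tri (m : ℤ)) := by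
  rw [aQ, ccQ, gb_self, ee_eq m (2 * m) (m : ℤ) (by push_cast; ring),
    (even_two_mul m).neg_one_pow]
  ring

/-- The pairing step. -/
lemma keyB (m : ℕ) (hm : 1 ≤ m) : ∑ j ∈ range (2 * m + 1), (j : Polynomial ℤ) * aQ m j =
    (∑ i ∈ range m, (-1) ^ (m + i) * X ^ (tri (i : ℤ)) * wpol m i)
      + C ((2 * m : ℕ) : ℤ) * X ^ (tri (m : ℤ)) := by
  have htop : ((2 * m : ℕ) : Polynomial ℤ) * aQ m (2 * m) = C ((2 * m : ℕ) : ℤ) * X ^ (tri (m : ℤ)) := by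
    rw [aQ_top, Polynomial.C_eq_natCast]
  rw [Finset.sum_range_succ, htop]
  have hmid : ∑ j ∈ range (2 * m), (j : Polynomial ℤ) * aQ m j
      = ∑ i ∈ range m, (((m - 1 - i : ℕ)) : Polynomial ℤ) * aQ m (m - 1 - i)
        + ∑ i ∈ range m, (((m + i : ℕ)) : Polynomial ℤ) * aQ m (m + i) := by
    rw [show 2 * m = m + m by ring, Finset.sum_range_add,
      ← Finset.sum_range_reflect (fun j => (j : Polynomial ℤ) * aQ m j) m]
  rw [hmid, ← Finset.sum_add_distrib]
  congr 1
  apply Finset.sum_congr rfl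
  intro i hi
  have hi' : i < m := Finset.mem_range.mp hi
  have ha1 : aQ m (m + i) = (-1) ^ (m + i) * (gb (2 * m) (m + i) * X ^ (tri (i : ℤ))) := by
    rw [aQ, ccQ, ee_mid]
  have hsymm : gb (2 * m) (m - 1 - i) = gb (2 * m) (m + 1 + i) := by
    have h := gb_symm (2 * m) (m + 1 + i) (by omega)
    rw [show 2 * m - (m + 1 + i) = m - 1 - i by omega] at h
    exact h
  have heem : ee m (m - 1 - i) = tri (-((i : ℤ) + 1)) := ee_eq _ _ _ (by omega)
  have ha2 : aQ m (m - 1 - i) = -((-1) ^ (m + i)) * (gb (2 * m) (m + 1 + i) * X ^ (tri (i : ℤ))) := by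
    rw [aQ, ccQ, hsymm, heem, tri_neg]
    have hs : ((-1 : Polynomial ℤ)) ^ (m - 1 - i) = (-1) ^ (m + i + 1) :=
      neg_one_pow_congr (by omega)
    rw [hs, pow_succ]
    ring
  have hc1 : ((m + i : ℕ) : Polynomial ℤ) = C ((m : ℤ) + i) := by
    rw [show (m : ℤ) + i = ((m + i : ℕ) : ℤ) by push_cast; ring, Polynomial.C_eq_natCast]
  have hc2 : ((m - 1 - i : ℕ) : Polynomial ℤ) = C ((m : ℤ) - 1 - i) := by
    rw [show (m : ℤ) - 1 - i = ((m - 1 - i : ℕ) : ℤ) by omega, Polynomial.C_eq_natCast]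
  rw [ha1, ha2, hc1, hc2, wpol]
  ring

lemma dvd_prod_sub_one (c : ℕ) (n : ℕ) (g : ℕ → ℕ) (h : ∀ i, i < n → c ≤ g i) :
    (X:Polynomial ℤ) ^ c ∣ (∏ i ∈ range n, (1 - X ^ (g i))) - 1 := by
  induction n with
  | zero => simp
  | succ n ih =>
    rw [Finset.prod_range_succ]
    have key : (∏ i ∈ range n, (1 - (X:Polynomial ℤ) ^ g i)) * (1 - X ^ g n) - 1 =
        ((∏ i ∈ range n, (1 - (X:Polynomial ℤ) ^ g i)) - 1) * (1 - X ^ g n)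
          - X ^ g n := by ring
    rw [key]
    exact dvd_sub ((ih (fun i hi => h i (by omega))).mul_right _)
      (pow_dvd_pow X (h n (by omega)))

lemma dvd_mul_sub_one {c : ℕ} {u v : Polynomial ℤ} (hu : (X:Polynomial ℤ) ^ c ∣ u - 1)
    (hv : (X:Polynomial ℤ) ^ c ∣ v - 1) : (X:Polynomial ℤ) ^ c ∣ u * v - 1 := by
  have : u * v - 1 = (u - 1) * v + (v - 1) := by ring
  rw [this]
  exact dvd_add (hu.mul_right _) hv

lemma gbD_cong (m a : ℕ) (ha1 : m ≤ a) (ha2 : a ≤ 2 * m) :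
    (X:Polynomial ℤ) ^ (2 * m - a + 1) ∣ gb (2 * m) a * DD (2 * m) - 1 := by
  have hsplit : DD (2 * m) = DD a * ∏ i ∈ range (2 * m - a), (1 - (X:Polynomial ℤ) ^ (a + i + 1)) := by
    obtain ⟨b, hb⟩ : ∃ b, 2 * m - a = b := ⟨_, rfl⟩
    rw [hb, DD, DD, show 2 * m = a + b by omega, Finset.prod_range_add]
  rw [hsplit, show gb (2*m) a * (DD a * ∏ i ∈ range (2*m-a), (1 - (X:Polynomial ℤ) ^ (a+i+1)))
    = (gb (2*m) a * DD a) * ∏ i ∈ range (2*m-a), (1 - (X:Polynomial ℤ) ^ (a+i+1)) by ring]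
  apply dvd_mul_sub_one
  · rw [DD, gb_prod (2 * m) a ha2]
    exact dvd_prod_sub_one _ a (fun i => 2 * m - a + i + 1)
      (fun i _ => by show 2 * m - a + 1 ≤ 2 * m - a + i + 1; omega)
  · exact dvd_prod_sub_one _ (2 * m - a) (fun i => a + i + 1)
      (fun i _ => by show 2 * m - a + 1 ≤ a + i + 1; omega)

lemma wD_cong (m i : ℕ) (hi : i < m) :
    (X:Polynomial ℤ) ^ (m - i) ∣ wpol m i * DD (2 * m) - C (2 * (i : ℤ) + 1) := by
  have h1 := gbD_cong m (m + i) (by omega) (by omega)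
  have h2 := gbD_cong m (m + 1 + i) (by omega) (by omega)
  rw [show 2 * m - (m + i) + 1 = m - i + 1 by omega] at h1
  rw [show 2 * m - (m + 1 + i) + 1 = m - i by omega] at h2
  have hC : C ((m:ℤ) + i) - C ((m:ℤ) - 1 - i) = C (2 * (i:ℤ) + 1) := by
    rw [← map_sub]; congr 1; ring
  have expand : wpol m i * DD (2 * m) - C (2 * (i : ℤ) + 1) =
      C ((m:ℤ) + i) * (gb (2 * m) (m + i) * DD (2 * m) - 1)
        - C ((m:ℤ) - 1 - i) * (gb (2 * m) (m + 1 + i) * DD (2 * m) - 1) := by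
    rw [wpol]
    linear_combination hC
  rw [expand]
  exact dvd_sub ((dvd_trans (pow_dvd_pow X (by omega)) h1).mul_left _) (h2.mul_left _)

lemma tri_ge (i : ℕ) : i ≤ tri (i : ℤ) := by
  have h := tri_eq (i : ℤ)
  have h2 : (i:ℤ) * ((i:ℤ) + 1) ≥ 2 * i := by nlinarith [Int.natCast_nonneg i]
  omega

noncomputable def JJ (M : ℕ) : Polynomial ℤ :=
  ∑ i ∈ range M, C (((-1:ℤ)) ^ i * (2 * i + 1)) * X ^ (tri (i : ℤ))

/-- The main polynomial congruence: Jacobi's identity modulo `X^(m+1)`. -/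
lemma jacobi_mod (m : ℕ) : (X:Polynomial ℤ) ^ (m + 1) ∣ (DD m) ^ 3 - JJ (m + 1) := by
  have E := identity1 m
  rw [keyB (m + 1) (by omega)] at E
  -- multiply by (-1)^(m+1) * DD (2*(m+1))
  have hsq : ((-1 : Polynomial ℤ)) ^ (m+1) * ((-1 : Polynomial ℤ)) ^ (m+1) = 1 := by
    rw [← pow_add]
    exact Even.neg_one_pow ⟨m + 1, rfl⟩
  have E' : DD m * DD (m + 1) * DD (2 * (m + 1)) =
      (∑ i ∈ range (m + 1), (-1:Polynomial ℤ) ^ (m + 1) * ((-1) ^ (m + 1 + i) * X ^ (tri (i:ℤ)) * (wpol (m+1) i * DD (2 * (m + 1)))))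
        + (-1:Polynomial ℤ) ^ (m + 1) * (C ((2 * (m+1) : ℕ) : ℤ) * X ^ (tri (((m+1) : ℕ) : ℤ)) * DD (2 * (m + 1))) := by
    have hS : (∑ i ∈ range (m + 1), (-1:Polynomial ℤ) ^ (m + 1) * ((-1) ^ (m + 1 + i) * X ^ (tri (i:ℤ)) * (wpol (m+1) i * DD (2 * (m + 1)))))
        = (-1:Polynomial ℤ) ^ (m + 1) * DD (2 * (m + 1)) *
          (∑ i ∈ range (m + 1), (-1:Polynomial ℤ) ^ (m + 1 + i) * X ^ (tri (i:ℤ)) * wpol (m+1) i) := by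
      rw [Finset.mul_sum]
      apply Finset.sum_congr rfl
      intro i _
      ring
    rw [hS]
    linear_combination ((-1:Polynomial ℤ) ^ m * DD (2*(m+1))) * E
      - (DD m * DD (m+1) * DD (2*(m+1))) * hsq
  -- T1
  have T1 : (X:Polynomial ℤ) ^ (m + 1) ∣ DD m * DD (m + 1) * DD (2 * (m + 1)) - (DD m) ^ 3 := by
    have hD1 : DD (m + 1) = DD m * (1 - X ^ (m + 1)) := by rw [DD, DD, Finset.prod_range_succ]
    have hD2 : DD (2 * (m + 1)) = DD m * ∏ i ∈ range (m + 2), (1 - (X:Polynomial ℤ) ^ (m + i + 1)) := by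
      have hn : m + (m + 2) = 2 * (m + 1) := by omega
      rw [DD, DD, ← hn, Finset.prod_range_add]
    rw [hD1, hD2]
    have key : DD m * (DD m * (1 - X^(m+1))) * (DD m * ∏ i ∈ range (m+2), (1 - (X:Polynomial ℤ)^(m+i+1))) - (DD m)^3
        = (DD m)^3 * ((1 - X^(m+1)) * (∏ i ∈ range (m+2), (1 - (X:Polynomial ℤ)^(m+i+1))) - 1) := by ring
    rw [key]
    apply Dvd.dvd.mul_left
    have hR := dvd_prod_sub_one (m + 1) (m + 2) (fun i => m + i + 1)
      (fun i _ => by show m + 1 ≤ m + i + 1; omega)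
    have expand2 : (1 - (X:Polynomial ℤ)^(m+1)) * (∏ i ∈ range (m+2), (1 - (X:Polynomial ℤ)^(m+i+1))) - 1
        = ((∏ i ∈ range (m+2), (1 - (X:Polynomial ℤ)^(m+i+1))) - 1)
          - X^(m+1) * ∏ i ∈ range (m+2), (1 - (X:Polynomial ℤ)^(m+i+1)) := by ring
    rw [expand2]
    exact dvd_sub hR (Dvd.dvd.mul_right (dvd_refl _) _)
  -- T2 per term
  have T2 : ∀ i ∈ range (m + 1), (X:Polynomial ℤ) ^ (m + 1) ∣
      (-1:Polynomial ℤ) ^ (m + 1) * ((-1) ^ (m + 1 + i) * X ^ (tri (i:ℤ)) * (wpol (m+1) i * DD (2 * (m + 1))))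
        - C (((-1:ℤ)) ^ i * (2 * i + 1)) * X ^ (tri (i : ℤ)) := by
    intro i hi
    have hi' : i < m + 1 := Finset.mem_range.mp hi
    have hsign : ((-1:Polynomial ℤ)) ^ (m + 1) * (-1) ^ (m + 1 + i) = (-1) ^ i := by
      rw [← pow_add]
      exact neg_one_pow_congr (by omega)
    have hCsplit : C (((-1:ℤ)) ^ i * (2 * i + 1)) = (-1:Polynomial ℤ) ^ i * C (2 * (i:ℤ) + 1) := by
      rw [map_mul, map_pow, map_neg, map_one]
    have expand3 : (-1:Polynomial ℤ) ^ (m + 1) * ((-1) ^ (m + 1 + i) * X ^ (tri (i:ℤ)) * (wpol (m+1) i * DD (2 * (m + 1))))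
        - C (((-1:ℤ)) ^ i * (2 * i + 1)) * X ^ (tri (i : ℤ))
        = ((-1:Polynomial ℤ) ^ (m+1) * (-1)^(m+1+i)) * (X ^ (tri (i:ℤ)) * (wpol (m+1) i * DD (2 * (m + 1)) - C (2 * (i:ℤ) + 1)))
          + (((-1:Polynomial ℤ) ^ (m+1) * (-1)^(m+1+i)) * C (2 * (i:ℤ) + 1) - C (((-1:ℤ)) ^ i * (2 * i + 1))) * X ^ (tri (i:ℤ)) := by
      ring
    rw [expand3, hsign, hCsplit]
    apply dvd_add
    · apply Dvd.dvd.mul_left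
      have hd := wD_cong (m + 1) i (by omega)
      have : (X:Polynomial ℤ) ^ (m + 1) ∣ X ^ (tri (i:ℤ)) * X ^ (m + 1 - i) := by
        rw [← pow_add]
        exact pow_dvd_pow X (by have := tri_ge i; omega)
      exact dvd_trans this (mul_dvd_mul_left _ hd)
    · rw [show (-1:Polynomial ℤ) ^ i * C (2 * (i:ℤ) + 1) - (-1:Polynomial ℤ) ^ i * C (2 * (i:ℤ) + 1) = 0 by ring]
      simp
  -- T3
  have T3 : (X:Polynomial ℤ) ^ (m + 1) ∣
      (-1:Polynomial ℤ) ^ (m + 1) * (C ((2 * (m+1) : ℕ) : ℤ) * X ^ (tri (((m+1) : ℕ) : ℤ)) * DD (2 * (m + 1))) := by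
    have : (X:Polynomial ℤ) ^ (m + 1) ∣ X ^ (tri (((m+1) : ℕ) : ℤ)) := pow_dvd_pow X (tri_ge (m+1))
    exact ((this.mul_left _).mul_right _).mul_left _
  -- assemble
  have final : (DD m) ^ 3 - JJ (m + 1) =
      -(DD m * DD (m + 1) * DD (2 * (m + 1)) - (DD m) ^ 3)
        + ((∑ i ∈ range (m + 1),
            ((-1:Polynomial ℤ) ^ (m + 1) * ((-1) ^ (m + 1 + i) * X ^ (tri (i:ℤ)) * (wpol (m+1) i * DD (2 * (m + 1))))
              - C (((-1:ℤ)) ^ i * (2 * i + 1)) * X ^ (tri (i : ℤ))))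
          + (-1:Polynomial ℤ) ^ (m + 1) * (C ((2 * (m+1) : ℕ) : ℤ) * X ^ (tri (((m+1) : ℕ) : ℤ)) * DD (2 * (m + 1)))) := by
    rw [JJ, Finset.sum_sub_distrib]
    linear_combination E'
  rw [final]
  exact dvd_add (Dvd.dvd.neg_right T1) (dvd_add (Finset.dvd_sum T2) T3)

/-! ### Section 4: the coefficients `jacz` -/

def T2fn (j : ℕ) : ℕ := j * (j + 1) / 2

noncomputable def jacz (n : ℕ) : ℤ :=
  ∑ j ∈ range (n + 1), (if T2fn j = n then ((-1:ℤ)) ^ j * (2 * j + 1) else 0)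

lemma T2fn_strictMono : StrictMono T2fn := by
  apply strictMono_nat_of_lt_succ
  intro k
  unfold T2fn
  have ha : k * (k + 1) / 2 * 2 = k * (k + 1) := Nat.div_mul_cancel (Nat.even_mul_succ_self k).two_dvd
  have hb : (k+1) * (k + 2) / 2 * 2 = (k+1) * (k + 2) := Nat.div_mul_cancel (Nat.even_mul_succ_self (k+1)).two_dvd
  have hab : (k+1) * (k + 2) = k * (k+1) + 2 * (k+1) := by ring
  set a := k * (k+1)
  set b := (k+1) * (k+2)
  omega

lemma T2fn_le (j : ℕ) : j ≤ T2fn j := T2fn_strictMono.le_apply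

lemma jacz_tri (j : ℕ) : jacz (T2fn j) = ((-1:ℤ)) ^ j * (2 * j + 1) := by
  rw [jacz]
  rw [Finset.sum_eq_single_of_mem j (Finset.mem_range.mpr (by have := T2fn_le j; omega))]
  · rw [if_pos rfl]
  · intro k _ hk
    rw [if_neg (fun h => hk (T2fn_strictMono.injective h))]

lemma jacz_zero (n : ℕ) (h : ∀ j, T2fn j ≠ n) : jacz n = 0 := by
  rw [jacz]
  apply Finset.sum_eq_zero
  intro j _
  rw [if_neg (h j)]

lemma tri_eq_T2fn (i : ℕ) : tri (i : ℤ) = T2fn i := tri_nat i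

lemma coeff_JJ (M n : ℕ) (h : n < M) : (JJ M).coeff n = jacz n := by
  rw [JJ, Polynomial.finset_sum_coeff]
  have hterm : ∀ i, (C (((-1:ℤ)) ^ i * (2 * i + 1)) * X ^ (tri (i:ℤ))).coeff n
      = (if T2fn i = n then ((-1:ℤ)) ^ i * (2 * i + 1) else 0) := by
    intro i
    rw [Polynomial.coeff_C_mul, Polynomial.coeff_X_pow, tri_eq_T2fn]
    by_cases hc : T2fn i = n
    · rw [if_pos hc, if_pos hc.symm, mul_one]
    · rw [if_neg hc, if_neg (fun hh => hc hh.symm), mul_zero]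
  rw [Finset.sum_congr rfl (fun i _ => hterm i)]
  rw [jacz]
  symm
  apply Finset.sum_subset (Finset.range_subset_range.mpr (by omega))
  intro j _ hj
  rw [if_neg]
  intro hT
  have := T2fn_le j
  simp only [Finset.mem_range, not_lt] at hj
  omega

lemma coeff_DD3 (N n : ℕ) (h : n ≤ N) : ((DD N ^ 3 : Polynomial ℤ)).coeff n = jacz n := by
  have hd := jacobi_mod N
  rw [Polynomial.X_pow_dvd_iff] at hd
  have := hd n (by omega)
  rw [Polynomial.coeff_sub, sub_eq_zero] at this
  rw [this, coeff_JJ (N+1) n (by omega)]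

/-! ### Section 5: the sigma recurrence via power series -/

noncomputable def σz (l : ℕ) : ℤ := ∑ d ∈ Nat.divisors l, (d : ℤ)

noncomputable def PS (N : ℕ) : PowerSeries ℤ :=
  ∏ k ∈ range N, (1 - (PowerSeries.X : PowerSeries ℤ) ^ (k + 1)) ^ 3

lemma coe_DD (N : ℕ) : ((DD N : Polynomial ℤ) : PowerSeries ℤ) =
    ∏ k ∈ range N, (1 - (PowerSeries.X : PowerSeries ℤ) ^ (k + 1)) := by
  induction N with
  | zero => simp [DD]
  | succ N ih =>
    rw [DD, Finset.prod_range_succ, Finset.prod_range_succ, ← DD, Polynomial.coe_mul, ih,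
      Polynomial.coe_sub, Polynomial.coe_one, Polynomial.coe_pow, Polynomial.coe_X]

lemma PS_eq_coe (N : ℕ) : ((DD N ^ 3 : Polynomial ℤ) : PowerSeries ℤ) = PS N := by
  rw [Polynomial.coe_pow, coe_DD, PS, Finset.prod_pow]

lemma coeff_PS (N n : ℕ) (h : n ≤ N) : PowerSeries.coeff n (PS N) = jacz n := by
  rw [← PS_eq_coe, Polynomial.coeff_coe, coeff_DD3 N n h]

noncomputable def geom (k : ℕ) : PowerSeries ℤ :=
  PowerSeries.mk fun n => if (k + 1) ∣ n then (1:ℤ) else 0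

lemma geom_inv (k : ℕ) : geom k * (1 - PowerSeries.X ^ (k + 1)) = 1 := by
  ext n
  have hc : PowerSeries.coeff n (geom k * (1 - PowerSeries.X ^ (k+1)))
      = (if (k+1) ∣ n then (1:ℤ) else 0)
        - (if k + 1 ≤ n then (if (k+1) ∣ (n - (k+1)) then (1:ℤ) else 0) else 0) := by
    rw [mul_sub, mul_one, map_sub, PowerSeries.coeff_mul_X_pow']
    rw [geom, PowerSeries.coeff_mk]
    by_cases hle : k + 1 ≤ n
    · rw [if_pos hle, if_pos hle, PowerSeries.coeff_mk]
    · rw [if_neg hle, if_neg hle]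
  rw [hc, PowerSeries.coeff_one]
  rcases Nat.eq_zero_or_pos n with rfl | hn
  · simp
  · rw [if_neg (show ¬ n = 0 by omega)]
    by_cases hle : k + 1 ≤ n
    · rw [if_pos hle]
      by_cases hdvd : (k+1) ∣ n
      · rw [if_pos hdvd, if_pos (Nat.dvd_sub hdvd (dvd_refl _))]; ring
      · rw [if_neg hdvd, if_neg (fun hcc => hdvd (by
          have h2 := Nat.dvd_add hcc (dvd_refl (k+1))
          rwa [Nat.sub_add_cancel hle] at h2))]
        ring
    · rw [if_neg hle, if_neg (fun hdvd => hle (Nat.le_of_dvd hn hdvd))]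
      ring

lemma intCast_eq_C (z : ℤ) : ((z : ℤ) : PowerSeries ℤ) = PowerSeries.C z := by
  rw [← map_intCast (PowerSeries.C (R := ℤ)) z, Int.cast_id]

noncomputable def LS (N : ℕ) : PowerSeries ℤ :=
  ∑ k ∈ range N, ((-3 * ((k:ℤ) + 1) : ℤ) : PowerSeries ℤ) * (PowerSeries.X ^ (k + 1) * geom k)

lemma X_deriv_factor (k : ℕ) :
    PowerSeries.X * (PowerSeries.derivative ℤ ((1 - PowerSeries.X ^ (k + 1)) ^ 3)) =
      (1 - PowerSeries.X ^ (k + 1)) ^ 3 *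
        (((-3 * ((k:ℤ) + 1) : ℤ) : PowerSeries ℤ) * (PowerSeries.X ^ (k + 1) * geom k)) := by
  have hdX : PowerSeries.derivative ℤ ((1 : PowerSeries ℤ) - PowerSeries.X ^ (k+1))
      = -((k+1 : ℕ) • (PowerSeries.X ^ k)) := by
    rw [map_sub, Derivation.map_one_eq_zero, zero_sub, Derivation.leibniz_pow,
      PowerSeries.derivative_X, smul_eq_mul, mul_one, Nat.add_sub_cancel]
  rw [Derivation.leibniz_pow, hdX]
  simp only [smul_neg, smul_eq_mul, nsmul_eq_mul]
  have h2 : ((1 : PowerSeries ℤ) - PowerSeries.X ^ (k+1)) ^ (3-1) = (1 - PowerSeries.X ^ (k+1)) ^ 2 := by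
    norm_num
  rw [h2]
  have hg := geom_inv k
  linear_combination (norm := (push_cast; ring1))
    (-(((-3 * ((k:ℤ) + 1) : ℤ) : PowerSeries ℤ)) * PowerSeries.X ^ (k+1)
      * (1 - PowerSeries.X ^ (k+1)) ^ 2) * hg

lemma X_deriv_PS (N : ℕ) :
    PowerSeries.X * PowerSeries.derivative ℤ (PS N) = PS N * LS N := by
  induction N with
  | zero =>
    rw [PS, LS]
    simp [Derivation.map_one_eq_zero]
  | succ N ih =>
    rw [PS, Finset.prod_range_succ, ← PS, Derivation.leibniz, LS, Finset.sum_range_succ, ← LS]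
    rw [smul_eq_mul, smul_eq_mul, mul_add]
    have h1 : PowerSeries.X * (PS N * PowerSeries.derivative ℤ ((1 - PowerSeries.X ^ (N+1)) ^ 3))
        = PS N * ((1 - PowerSeries.X ^ (N+1)) ^ 3 * (((-3 * ((N:ℤ) + 1) : ℤ) : PowerSeries ℤ) * (PowerSeries.X ^ (N + 1) * geom N))) := by
      rw [show PowerSeries.X * (PS N * PowerSeries.derivative ℤ ((1 - PowerSeries.X ^ (N+1)) ^ 3))
        = PS N * (PowerSeries.X * PowerSeries.derivative ℤ ((1 - PowerSeries.X ^ (N+1)) ^ 3)) by ring,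
        X_deriv_factor]
    have h2 : PowerSeries.X * ((1 - PowerSeries.X ^ (N+1)) ^ 3 * PowerSeries.derivative ℤ (PS N))
        = (1 - PowerSeries.X ^ (N+1)) ^ 3 * (PS N * LS N) := by
      rw [show PowerSeries.X * ((1 - PowerSeries.X ^ (N+1)) ^ 3 * PowerSeries.derivative ℤ (PS N))
        = (1 - PowerSeries.X ^ (N+1)) ^ 3 * (PowerSeries.X * PowerSeries.derivative ℤ (PS N)) by ring, ih]
    rw [h1, h2]
    ring

lemma coeff_LS (N l : ℕ) (hl : l ≤ N) : PowerSeries.coeff l (LS N) = -3 * σz l := by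
  rw [LS, map_sum]
  have hterm : ∀ k : ℕ, PowerSeries.coeff l (((-3 * ((k:ℤ) + 1) : ℤ) : PowerSeries ℤ) * (PowerSeries.X ^ (k + 1) * geom k))
      = -3 * ((k:ℤ)+1) * (if (k + 1) ∣ l ∧ k + 1 ≤ l then 1 else 0) := by
    intro k
    rw [intCast_eq_C, PowerSeries.coeff_C_mul, mul_comm (PowerSeries.X ^ (k+1)) (geom k),
      PowerSeries.coeff_mul_X_pow']
    by_cases hle : k + 1 ≤ l
    · rw [if_pos hle, geom, PowerSeries.coeff_mk]
      by_cases hdvd : (k+1) ∣ l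
      · rw [if_pos ((Nat.dvd_sub hdvd (dvd_refl _))), if_pos ⟨hdvd, hle⟩]
      · rw [if_neg (fun hc => hdvd (by
          have := Nat.dvd_add hc (dvd_refl (k+1))
          rwa [Nat.sub_add_cancel hle] at this)), if_neg (fun hc => hdvd hc.1)]
    · rw [if_neg hle, if_neg (fun hc => hle hc.2), mul_zero]
  rw [Finset.sum_congr rfl (fun k _ => hterm k)]
  rcases Nat.eq_zero_or_pos l with hl0 | hl0
  · subst hl0
    rw [show σz 0 = 0 by rw [σz, Nat.divisors_zero, Finset.sum_empty], mul_zero]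
    apply Finset.sum_eq_zero
    intro k _
    rw [if_neg (fun hc => by omega), mul_zero]
  · have hstep : ∀ k : ℕ, -3 * ((k:ℤ)+1) * (if (k + 1) ∣ l ∧ k + 1 ≤ l then 1 else 0)
        = -3 * (((k+1:ℕ):ℤ) * (if (k + 1) ∣ l ∧ k + 1 ≤ l then 1 else 0)) := by
      intro k; push_cast; ring
    rw [Finset.sum_congr rfl (fun k _ => hstep k), ← Finset.mul_sum]
    congr 1
    have hIco : ∑ k ∈ range N, (((k+1:ℕ):ℤ) * (if (k + 1) ∣ l ∧ k + 1 ≤ l then 1 else 0))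
        = ∑ d ∈ Finset.Ico 1 (N+1), ((d:ℤ) * (if d ∣ l ∧ d ≤ l then 1 else 0)) := by
      rw [Finset.sum_Ico_eq_sum_range]
      simp only [Nat.add_sub_cancel]
      apply Finset.sum_congr rfl
      intro k _
      rw [show 1 + k = k + 1 by omega]
    rw [hIco]
    have hsplit : ∑ d ∈ Finset.Ico 1 (l+1), ((d:ℤ) * (if d ∣ l ∧ d ≤ l then 1 else 0))
        + ∑ d ∈ Finset.Ico (l+1) (N+1), ((d:ℤ) * (if d ∣ l ∧ d ≤ l then 1 else 0))
        = ∑ d ∈ Finset.Ico 1 (N+1), ((d:ℤ) * (if d ∣ l ∧ d ≤ l then 1 else 0)) :=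
      Finset.sum_Ico_consecutive _ (by omega) (by omega)
    rw [← hsplit]
    have hzero : ∑ d ∈ Finset.Ico (l+1) (N+1), ((d:ℤ) * (if d ∣ l ∧ d ≤ l then 1 else 0)) = 0 := by
      apply Finset.sum_eq_zero
      intro d hd
      rw [Finset.mem_Ico] at hd
      rw [if_neg (fun hc => by omega), mul_zero]
    rw [hzero, add_zero, σz]
    have hdiv : Nat.divisors l = Finset.filter (· ∣ l) (Finset.Ico 1 (l + 1)) := rfl
    rw [hdiv, Finset.sum_filter]
    apply Finset.sum_congr rfl
    intro d hd
    rw [Finset.mem_Ico] at hd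
    by_cases hc : d ∣ l
    · rw [if_pos hc, if_pos ⟨hc, by omega⟩, mul_one]
    · rw [if_neg hc, if_neg (fun hcc => hc hcc.1), mul_zero]

/-- The sigma recurrence. -/
lemma sigma_rec (n : ℕ) (hn : 1 ≤ n) :
    (n:ℤ) * jacz n = ∑ p ∈ Finset.HasAntidiagonal.antidiagonal n, jacz p.1 * (-3 * σz p.2) := by
  obtain ⟨n', rfl⟩ : ∃ n', n = n' + 1 := ⟨n - 1, by omega⟩
  have h := congrArg (PowerSeries.coeff (n' + 1)) (X_deriv_PS (n' + 1))
  rw [PowerSeries.coeff_succ_X_mul, PowerSeries.coeff_derivative, coeff_PS (n'+1) (n'+1) le_rfl,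
    PowerSeries.coeff_mul] at h
  rw [show ((n' + 1 : ℕ) : ℤ) * jacz (n' + 1) = jacz (n'+1) * ((n':ℤ)+1) by push_cast; ring, h]
  apply Finset.sum_congr rfl
  intro p hp
  have hmem := Finset.HasAntidiagonal.mem_antidiagonal.mp hp
  rw [coeff_PS (n'+1) p.1 (by omega), coeff_LS (n'+1) p.2 (by omega)]


/-! ### Section 6: analytic lemmas -/

noncomputable def σR (m : ℕ) : ℝ := ∑ d ∈ Nat.divisors m, (d : ℝ)

lemma σR_nonneg (m : ℕ) : 0 ≤ σR m :=
  Finset.sum_nonneg (fun d _ => by positivity)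

lemma σR_le (m : ℕ) : σR m ≤ (m:ℝ) ^ 2 := by
  have h1 : σR m ≤ (Nat.divisors m).card • (m:ℝ) := by
    apply Finset.sum_le_card_nsmul
    intro d hd
    exact_mod_cast Nat.divisor_le hd
  have h2 : (Nat.divisors m).card ≤ m := by
    calc (Nat.divisors m).card ≤ (Finset.Ico 1 (m+1)).card := Finset.card_filter_le _ _
    _ = m := by rw [Nat.card_Ico]; omega
  calc σR m ≤ (Nat.divisors m).card • (m:ℝ) := h1
  _ = ((Nat.divisors m).card : ℝ) * m := by rw [nsmul_eq_mul]
  _ ≤ (m:ℝ) * m := by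
      apply mul_le_mul_of_nonneg_right _ (by positivity)
      exact_mod_cast h2
  _ = (m:ℝ) ^ 2 := by ring

lemma σR_cast (l : ℕ) : ((σz l : ℤ) : ℝ) = σR l := by
  rw [σz, σR]
  push_cast
  rfl

lemma summable_shift_poly_geom {r : ℝ} (h0 : 0 ≤ r) (h1 : r < 1) (k : ℕ) :
    Summable (fun n : ℕ => ((n:ℝ) + 1) ^ k * r ^ n) := by
  have hs : ∀ i : ℕ, Summable (fun n : ℕ => ((1:ℝ) ^ (k - i) * (k.choose i : ℝ)) * ((n:ℝ) ^ i * r ^ n)) :=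
    fun i => (summable_pow_mul_geometric_of_norm_lt_one (R := ℝ) i
      (by rwa [Real.norm_eq_abs, abs_of_nonneg h0])).mul_left _
  have htot : Summable (fun n : ℕ => ∑ i ∈ range (k+1),
      ((1:ℝ) ^ (k - i) * (k.choose i : ℝ)) * ((n:ℝ) ^ i * r ^ n)) :=
    summable_sum (fun i _ => hs i)
  apply htot.congr
  intro n
  rw [add_pow, Finset.sum_mul]
  apply Finset.sum_congr rfl
  intro i _
  ring

lemma pow_sub_one_le {r : ℝ} (h0 : 0 < r) (h1 : r ≤ 1) (n : ℕ) :
    r ^ (n - 1) ≤ (1 / r) * r ^ n := by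
  match n with
  | 0 =>
    simp only [Nat.zero_sub, pow_zero, mul_one]
    rw [le_div_iff₀ h0]
    simpa using h1
  | n + 1 =>
    rw [Nat.add_sub_cancel, pow_succ]
    rw [show (1/r) * (r^n * r) = r^n * (r * (1/r)) by ring, mul_one_div_cancel h0.ne', mul_one]

/-- summability of the `A`-series. -/
lemma summable_A (i : ℕ) {x : ℝ} (hx : |x| < 1) :
    Summable (fun m : ℕ => (m:ℝ) ^ i * σR m * x ^ m) := by
  apply Summable.of_norm_bounded (g := fun m : ℕ => ((m:ℝ) + 1) ^ (i + 2) * |x| ^ m)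
    (summable_shift_poly_geom (abs_nonneg x) hx (i+2))
  intro m
  rw [norm_mul, norm_mul, norm_pow, norm_pow]
  have hm : ‖(m:ℝ)‖ = (m:ℝ) := by rw [Real.norm_eq_abs, abs_of_nonneg (by positivity)]
  have hσ : ‖σR m‖ = σR m := by rw [Real.norm_eq_abs, abs_of_nonneg (σR_nonneg m)]
  rw [hm, hσ, Real.norm_eq_abs]
  calc (m:ℝ)^i * σR m * |x|^m ≤ (m:ℝ)^i * (m:ℝ)^2 * |x|^m := by
        apply mul_le_mul_of_nonneg_right _ (by positivity)
        exact mul_le_mul_of_nonneg_left (σR_le m) (by positivity)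
  _ = (m:ℝ)^(i+2) * |x|^m := by rw [pow_add]
  _ ≤ ((m:ℝ)+1)^(i+2) * |x|^m := by
        apply mul_le_mul_of_nonneg_right _ (by positivity)
        apply pow_le_pow_left₀ (by positivity)
        linarith
  
lemma hasDerivAt_A (i : ℕ) {q : ℝ} (h0 : 0 < q) (h1 : q < 1) :
    HasDerivAt (fun x => A x i) (A q (i + 1) / q) q := by
  set r : ℝ := (1 + q) / 2 with hr
  have hr0 : 0 < r := by rw [hr]; linarith
  have hr1 : r < 1 := by rw [hr]; linarith
  have hqr : q < r := by rw [hr]; linarith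
  set f : ℕ → ℝ → ℝ := fun m x => (m:ℝ) ^ i * (∑ d ∈ Nat.divisors m, (d : ℝ)) * x ^ m with hf
  set f' : ℕ → ℝ → ℝ := fun m x => (m:ℝ) ^ i * (∑ d ∈ Nat.divisors m, (d : ℝ)) * ((m:ℝ) * x ^ (m - 1)) with hf'
  set u : ℕ → ℝ := fun m => (1/r) * ((m:ℝ) + 1) ^ (i + 3) * r ^ m with hu
  have hU : Summable u := by
    apply Summable.congr ((summable_shift_poly_geom hr0.le hr1 (i+3)).mul_left (1/r))
    intro m
    rw [hu]
    ring
  have key : HasDerivAt (fun x => ∑' m, f m x) (∑' m, f' m q) q := by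
    apply hasDerivAt_tsum_of_isPreconnected hU (isOpen_Ioo (a := -r) (b := r))
      ((convex_Ioo _ _).isPreconnected)
    · intro m x _
      exact ((hasDerivAt_pow m x).const_mul _)
    · intro m x hx
      rw [Set.mem_Ioo] at hx
      have hxr : |x| ≤ r := by rw [abs_le]; constructor <;> linarith [hx.1, hx.2]
      rw [hf', hu]
      simp only []
      rw [Real.norm_eq_abs, abs_mul, abs_mul, abs_mul, abs_pow, abs_pow]
      have h1' : |(m:ℝ)| = (m:ℝ) := abs_of_nonneg (by positivity)
      have h2' : |∑ d ∈ Nat.divisors m, (d : ℝ)| = σR m := by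
        rw [show (∑ d ∈ Nat.divisors m, (d:ℝ)) = σR m from rfl, abs_of_nonneg (σR_nonneg m)]
      rw [h1', h2']
      calc (m:ℝ)^i * σR m * ((m:ℝ) * |x|^(m-1))
          ≤ (m:ℝ)^i * (m:ℝ)^2 * ((m:ℝ) * r^(m-1)) := by
            apply mul_le_mul (mul_le_mul_of_nonneg_left (σR_le m) (by positivity))
              (mul_le_mul_of_nonneg_left (pow_le_pow_left₀ (abs_nonneg x) hxr _) (by positivity))
              (by positivity) (by positivity)
      _ = (m:ℝ)^(i+3) * r^(m-1) := by rw [pow_add]; ring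
      _ ≤ ((m:ℝ)+1)^(i+3) * ((1/r) * r^m) := by
            apply mul_le_mul (pow_le_pow_left₀ (by positivity) (by linarith) _)
              (pow_sub_one_le hr0 hr1.le m) (by positivity) (by positivity)
      _ = 1/r * ((m:ℝ)+1)^(i+3) * r^m := by ring
    · exact Set.mem_Ioo.mpr ⟨by linarith, hqr⟩
    · exact (summable_A i (by rw [abs_of_pos h0]; exact h1)).congr (fun m => by rw [σR])
    · exact Set.mem_Ioo.mpr ⟨by linarith, hqr⟩
  have hval : (∑' m, f' m q) = A q (i + 1) / q := by
    rw [eq_div_iff h0.ne']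
    rw [← tsum_mul_right, A]
    apply tsum_congr
    intro m
    match m with
    | 0 => simp [hf']
    | m + 1 =>
      rw [hf']
      simp only []
      rw [Nat.add_sub_cancel]
      rw [show ((m+1:ℕ):ℝ)^i * (∑ d ∈ Nat.divisors (m+1), (d : ℝ)) * (((m+1:ℕ):ℝ) * q ^ m) * q
        = ((m+1:ℕ):ℝ)^i * ((m+1:ℕ):ℝ) * (∑ d ∈ Nat.divisors (m+1), (d : ℝ)) * (q ^ m * q) by ring,
        ← pow_succ, ← pow_succ]
  rw [← hval]
  exact key

lemma theta_A (i : ℕ) {q : ℝ} (h0 : 0 < q) (h1 : q < 1) :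
    Theta (fun x => A x i) q = A q (i + 1) := by
  rw [Theta, (hasDerivAt_A i h0 h1).deriv]
  field_simp


/-! ### Section 6b: `P0` -/

noncomputable def jacR (n : ℕ) : ℝ := ((jacz n : ℤ) : ℝ)

lemma T2fn_le_sq (j : ℕ) : T2fn j ≤ (j+1) * (j+1) := by
  have h1 : T2fn j ≤ j * (j + 1) := Nat.div_le_self _ _
  have h2 : j * (j+1) ≤ (j+1) * (j+1) := Nat.mul_le_mul_right _ (by omega)
  omega

lemma summable_P0 {x : ℝ} (hx : |x| < 1) :
    Summable (fun j : ℕ => (-1 : ℝ) ^ j * (2 * (j : ℝ) + 1) * x ^ (j * (j + 1) / 2)) := by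
  apply Summable.of_norm_bounded (g := fun j : ℕ => 3 * (((j:ℝ) + 1) ^ 1 * |x| ^ j))
    ((summable_shift_poly_geom (abs_nonneg x) hx 1).mul_left 3)
  intro j
  rw [norm_mul, norm_mul, norm_pow, norm_pow, norm_neg, norm_one, one_pow, one_mul]
  have h1 : ‖2 * (j:ℝ) + 1‖ = 2 * (j:ℝ) + 1 := by
    rw [Real.norm_eq_abs, abs_of_nonneg (by positivity)]
  rw [h1, Real.norm_eq_abs]
  calc (2 * (j:ℝ) + 1) * |x| ^ (j * (j+1)/2)
      ≤ (2 * (j:ℝ) + 1) * |x| ^ j := by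
        apply mul_le_mul_of_nonneg_left _ (by positivity)
        exact pow_le_pow_of_le_one (abs_nonneg x) hx.le (T2fn_le j)
  _ ≤ 3 * (((j:ℝ) + 1) ^ 1 * |x| ^ j) := by
        rw [pow_one]
        have : (2 * (j:ℝ) + 1) ≤ 3 * ((j:ℝ) + 1) := by linarith
        calc (2 * (j:ℝ) + 1) * |x| ^ j ≤ (3 * ((j:ℝ)+1)) * |x| ^ j :=
              mul_le_mul_of_nonneg_right this (by positivity)
        _ = 3 * (((j:ℝ) + 1) * |x| ^ j) := by ring

lemma hasDerivAt_P0 {q : ℝ} (h0 : 0 < q) (h1 : q < 1) :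
    HasDerivAt P0 (∑' j : ℕ, (-1 : ℝ) ^ j * (2 * (j : ℝ) + 1) *
      (((j * (j + 1) / 2 : ℕ) : ℝ) * q ^ (j * (j + 1) / 2 - 1))) q := by
  set r : ℝ := (1 + q) / 2 with hr
  have hr0 : 0 < r := by rw [hr]; linarith
  have hr1 : r < 1 := by rw [hr]; linarith
  have hqr : q < r := by rw [hr]; linarith
  set g : ℕ → ℝ → ℝ := fun j x => (-1 : ℝ) ^ j * (2 * (j : ℝ) + 1) * x ^ (j * (j + 1) / 2) with hg
  set g' : ℕ → ℝ → ℝ := fun j x => (-1 : ℝ) ^ j * (2 * (j : ℝ) + 1) *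
    (((j * (j + 1) / 2 : ℕ) : ℝ) * x ^ (j * (j + 1) / 2 - 1)) with hg'
  set u : ℕ → ℝ := fun j => (2 * (1/r)) * (((j:ℝ) + 1) ^ 3 * r ^ j) with hu
  have hU : Summable u := (summable_shift_poly_geom hr0.le hr1 3).mul_left _
  have key : HasDerivAt (fun x : ℝ => ∑' j : ℕ, g j x) (∑' j : ℕ, g' j q) q := by
    apply hasDerivAt_tsum_of_isPreconnected hU (isOpen_Ioo (a := -r) (b := r))
      ((convex_Ioo _ _).isPreconnected)
    · intro j x _
      exact ((hasDerivAt_pow _ x).const_mul _)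
    · intro j x hx
      rw [Set.mem_Ioo] at hx
      have hxr : |x| ≤ r := by rw [abs_le]; constructor <;> linarith [hx.1, hx.2]
      rw [hg', hu]
      simp only []
      rw [Real.norm_eq_abs, abs_mul, abs_mul, abs_mul, abs_pow, abs_pow, abs_neg, abs_one, one_pow,
        one_mul]
      have h1' : |2 * (j:ℝ) + 1| = 2 * (j:ℝ) + 1 := abs_of_nonneg (by positivity)
      have h2' : |((j * (j + 1) / 2 : ℕ) : ℝ)| = ((j * (j + 1) / 2 : ℕ) : ℝ) :=
        abs_of_nonneg (by positivity)
      rw [h1', h2']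
      have c1 : 2 * (j:ℝ) + 1 ≤ 2 * ((j:ℝ) + 1) := by linarith
      have c2 : ((j * (j + 1) / 2 : ℕ) : ℝ) ≤ ((j:ℝ) + 1) ^ 2 := by
        have hcast : ((j * (j + 1) / 2 : ℕ) : ℝ) ≤ (((j+1) * (j+1) : ℕ) : ℝ) := by
          exact_mod_cast T2fn_le_sq j
        calc ((j * (j + 1) / 2 : ℕ) : ℝ) ≤ (((j+1) * (j+1) : ℕ) : ℝ) := hcast
          _ = ((j:ℝ) + 1) ^ 2 := by push_cast; ring
      have c3 : |x| ^ (j * (j + 1) / 2 - 1) ≤ (1/r) * r ^ j := by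
        calc |x| ^ (j * (j + 1) / 2 - 1) ≤ r ^ (j * (j + 1) / 2 - 1) :=
              pow_le_pow_left₀ (abs_nonneg x) hxr _
        _ ≤ r ^ (j - 1) := pow_le_pow_of_le_one hr0.le hr1.le
              (by have := T2fn_le j; unfold T2fn at this; omega)
        _ ≤ (1/r) * r ^ j := pow_sub_one_le hr0 hr1.le j
      calc (2 * (j:ℝ) + 1) * (((j * (j + 1) / 2 : ℕ) : ℝ) * |x| ^ (j * (j + 1) / 2 - 1))
          ≤ (2 * ((j:ℝ)+1)) * (((j:ℝ) + 1) ^ 2 * ((1/r) * r ^ j)) := by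
            apply mul_le_mul c1 (mul_le_mul c2 c3 (by positivity) (by positivity))
              (by positivity) (by positivity)
      _ = (2 * (1/r)) * (((j:ℝ) + 1) ^ 3 * r ^ j) := by ring
    · exact Set.mem_Ioo.mpr ⟨by linarith, hqr⟩
    · exact summable_P0 (by rw [abs_of_pos h0]; exact h1)
    · exact Set.mem_Ioo.mpr ⟨by linarith, hqr⟩
  exact key

lemma jacR_bound (n : ℕ) : |jacR n| ≤ 2 * (n:ℝ) + 1 := by
  unfold jacR
  rcases Classical.em (∃ j, T2fn j = n) with ⟨j, hj⟩ | hno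
  · rw [← hj, jacz_tri]
    push_cast
    rw [abs_mul, abs_pow, abs_neg, abs_one, one_pow, one_mul,
      abs_of_nonneg (by positivity : (0:ℝ) ≤ 2 * (j:ℝ) + 1)]
    have hjn : (j:ℝ) ≤ ((T2fn j : ℕ) : ℝ) := by exact_mod_cast T2fn_le j
    linarith
  · rw [jacz_zero n (fun j hj => hno ⟨j, hj⟩)]
    simp
    positivity

lemma summable_jacR {x : ℝ} (hx : |x| < 1) : Summable (fun n : ℕ => jacR n * x ^ n) := by
  apply Summable.of_norm_bounded (g := fun n : ℕ => 3 * (((n:ℝ) + 1) ^ 1 * |x| ^ n))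
    ((summable_shift_poly_geom (abs_nonneg x) hx 1).mul_left 3)
  intro n
  rw [norm_mul, norm_pow, Real.norm_eq_abs, Real.norm_eq_abs, pow_one]
  calc |jacR n| * |x| ^ n ≤ (2 * (n:ℝ) + 1) * |x| ^ n :=
        mul_le_mul_of_nonneg_right (jacR_bound n) (by positivity)
  _ ≤ 3 * (((n:ℝ) + 1) * |x| ^ n) := by
        have : (2 * (n:ℝ) + 1) ≤ 3 * ((n:ℝ) + 1) := by linarith
        calc (2 * (n:ℝ) + 1) * |x| ^ n ≤ (3 * ((n:ℝ)+1)) * |x| ^ n :=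
              mul_le_mul_of_nonneg_right this (by positivity)
        _ = 3 * (((n:ℝ) + 1) * |x| ^ n) := by ring

lemma summable_σR {x : ℝ} (hx : |x| < 1) : Summable (fun n : ℕ => σR n * x ^ n) := by
  have := summable_A 0 hx
  apply this.congr
  intro m
  rw [pow_zero, one_mul]

lemma P0_eq_tsum_jacR {x : ℝ} (hx : |x| < 1) : P0 x = ∑' n : ℕ, jacR n * x ^ n := by
  have hsupp : Function.support (fun n : ℕ => jacR n * x ^ n) ⊆ Set.range T2fn := by
    intro n hn
    by_contra hc
    refine Function.mem_support.mp hn ?_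
    show jacR n * x ^ n = 0
    unfold jacR
    rw [jacz_zero n (fun j hj => hc ⟨j, hj⟩)]
    norm_num
  rw [P0, ← Function.Injective.tsum_eq T2fn_strictMono.injective hsupp]
  apply tsum_congr
  intro j
  have hjt := jacz_tri j
  show (-1 : ℝ) ^ j * (2 * (j : ℝ) + 1) * x ^ (j * (j + 1) / 2) = jacR (T2fn j) * x ^ (T2fn j)
  unfold jacR
  rw [hjt, show T2fn j = j * (j+1)/2 from rfl]
  push_cast
  ring

lemma A0_eq_tsum_σR (x : ℝ) : A x 0 = ∑' n : ℕ, σR n * x ^ n := by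
  rw [A]
  apply tsum_congr
  intro m
  rw [pow_zero, one_mul, σR]

/-- The fundamental identity `Θ P0 = -3 P0 A0`. -/
lemma theta_P0 {q : ℝ} (h0 : 0 < q) (h1 : q < 1) :
    Theta P0 q = -3 * P0 q * A q 0 := by
  have habs : |q| < 1 := by rw [abs_of_pos h0]; exact h1
  -- LHS as a power series
  have hsupp : Function.support (fun n : ℕ => (n : ℝ) * jacR n * q ^ n) ⊆ Set.range T2fn := by
    intro n hn
    by_contra hc
    refine Function.mem_support.mp hn ?_
    show (n : ℝ) * jacR n * q ^ n = 0
    unfold jacR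
    rw [jacz_zero n (fun j hj => hc ⟨j, hj⟩)]
    norm_num
  have hL : Theta P0 q = ∑' n : ℕ, (n : ℝ) * jacR n * q ^ n := by
    rw [Theta, (hasDerivAt_P0 h0 h1).deriv, ← tsum_mul_left,
      ← Function.Injective.tsum_eq T2fn_strictMono.injective hsupp]
    apply tsum_congr
    intro j
    have hjt := jacz_tri j
    show q * ((-1 : ℝ) ^ j * (2 * (j : ℝ) + 1) *
        (((j * (j + 1) / 2 : ℕ) : ℝ) * q ^ (j * (j + 1) / 2 - 1)))
      = ((T2fn j : ℕ) : ℝ) * jacR (T2fn j) * q ^ (T2fn j)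
    unfold jacR
    rw [hjt, show T2fn j = j * (j+1)/2 from rfl]
    rcases Nat.eq_zero_or_pos (j * (j+1)/2) with hz | hpos
    · rw [hz]
      norm_num
    · have hq : q ^ (j*(j+1)/2 - 1) * q = q ^ (j*(j+1)/2) := by
        rw [← pow_succ, Nat.sub_add_cancel hpos]
      push_cast
      linear_combination ((-1:ℝ)^j * (2*(j:ℝ)+1) * ((j * (j+1)/2 : ℕ) : ℝ)) * hq
  -- RHS as a Cauchy product
  have hnormJ : Summable (fun n : ℕ => ‖jacR n * q ^ n‖) := by
    simpa only [Real.norm_eq_abs] using (summable_jacR habs).abs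
  have hnormσ : Summable (fun n : ℕ => ‖σR n * q ^ n‖) := by
    simpa only [Real.norm_eq_abs] using (summable_σR habs).abs
  have hR : P0 q * A q 0 = ∑' n : ℕ, ∑ kl ∈ Finset.HasAntidiagonal.antidiagonal n, (jacR kl.1 * q ^ kl.1) * (σR kl.2 * q ^ kl.2) := by
    rw [P0_eq_tsum_jacR habs, A0_eq_tsum_σR]
    exact tsum_mul_tsum_eq_tsum_sum_antidiagonal_of_summable_norm hnormJ hnormσ
  rw [hL, show -3 * P0 q * A q 0 = -3 * (P0 q * A q 0) by ring, hR, ← tsum_mul_left]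
  apply tsum_congr
  intro n
  rw [Finset.mul_sum]
  rcases Nat.eq_zero_or_pos n with rfl | hn
  · rw [Finset.Nat.antidiagonal_zero, Finset.sum_singleton]
    simp [σR]
  · have hrec := sigma_rec n hn
    have hcast : (n : ℝ) * jacR n = ∑ p ∈ Finset.HasAntidiagonal.antidiagonal n, jacR p.1 * (-3 * σR p.2) := by
      unfold jacR
      have := congrArg (fun z : ℤ => (z : ℝ)) hrec
      push_cast at this
      rw [this]
      push_cast
      apply Finset.sum_congr rfl
      intro p _
      rw [σR_cast]
    rw [hcast, Finset.sum_mul]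
    apply Finset.sum_congr rfl
    intro p hp
    have hmem := Finset.HasAntidiagonal.mem_antidiagonal.mp hp
    rw [← hmem, pow_add]
    ring


/-! ### Section 7: polynomial representation of `Pm` and the main theorem -/

open MvPolynomial in
noncomputable def AF {k : ℕ} (P : MvPolynomial (Fin k) ℚ) : ℝ → ℝ :=
  fun q => MvPolynomial.aeval (fun t : Fin k => A q (t : ℕ)) P

open MvPolynomial in
noncomputable def DP {k : ℕ} (P : MvPolynomial (Fin k) ℚ) : MvPolynomial (Fin (k+1)) ℚ :=
  ∑ i : Fin k, MvPolynomial.X i.succ * MvPolynomial.rename Fin.castSucc (MvPolynomial.pderiv i P)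

open MvPolynomial

lemma DP_add {k : ℕ} (p p' : MvPolynomial (Fin k) ℚ) : DP (p + p') = DP p + DP p' := by
  unfold DP
  rw [← Finset.sum_add_distrib]
  apply Finset.sum_congr rfl
  intro i _
  rw [map_add, map_add, mul_add]

lemma DP_C {k : ℕ} (r : ℚ) : DP (C r : MvPolynomial (Fin k) ℚ) = 0 := by
  unfold DP
  apply Finset.sum_eq_zero
  intro i _
  rw [pderiv_C, map_zero, mul_zero]

lemma DP_mul_X {k : ℕ} (p : MvPolynomial (Fin k) ℚ) (i : Fin k) :
    DP (p * X i) = DP p * X i.castSucc + X i.succ * rename Fin.castSucc p := by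
  unfold DP
  have hterm : ∀ j : Fin k, X j.succ * rename Fin.castSucc (pderiv j (p * X i)) =
      (X j.succ * rename Fin.castSucc (pderiv j p)) * X i.castSucc
        + X j.succ * rename Fin.castSucc p * (if i = j then 1 else 0) := by
    intro j
    rw [pderiv_mul, pderiv_X, map_add, map_mul, rename_X, mul_add, Pi.single_apply, map_mul]
    rw [apply_ite (rename (Fin.castSucc (n := k))), map_one, map_zero]
    ring
  rw [Finset.sum_congr rfl (fun j _ => hterm j), Finset.sum_add_distrib, ← Finset.sum_mul]
  congr 1
  rw [Finset.sum_eq_single i]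
  · rw [if_pos rfl, mul_one]
  · intro b _ hb
    rw [if_neg (fun hh => hb hh.symm), mul_zero]
  · intro h
    exact absurd (Finset.mem_univ i) h

lemma hasDerivAt_AF {k : ℕ} (P : MvPolynomial (Fin k) ℚ) {q : ℝ} (h0 : 0 < q) (h1 : q < 1) :
    HasDerivAt (AF P) (AF (DP P) q / q) q := by
  induction P using MvPolynomial.induction_on with
  | C r =>
    have hfun : AF (C r : MvPolynomial (Fin k) ℚ) = fun _ : ℝ => (algebraMap ℚ ℝ) r :=
      funext fun x => by rw [AF, MvPolynomial.aeval_C]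
    have hval : AF (DP (C r : MvPolynomial (Fin k) ℚ)) q / q = 0 := by
      rw [DP_C, AF, map_zero, zero_div]
    rw [hfun, hval]
    exact hasDerivAt_const q _
  | add p p' ih ih' =>
    have hfun : AF (p + p') = fun x => AF p x + AF p' x := funext fun x => by
      rw [AF, AF, AF, map_add]
    have hval : AF (DP (p + p')) q / q = AF (DP p) q / q + AF (DP p') q / q := by
      rw [DP_add, AF, AF, AF, map_add, add_div]
    rw [hfun, hval]
    exact ih.add ih'
  | mul_X p i ih =>
    have hfun : AF (p * X i) = fun x => AF p x * A x (i : ℕ) := funext fun x => by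
      rw [AF, AF, map_mul, MvPolynomial.aeval_X]
    have hcomp : ((fun t : Fin (k+1) => A q (t : ℕ)) ∘ Fin.castSucc) = (fun t : Fin k => A q (t : ℕ)) :=
      funext fun t => by rw [Function.comp_apply, Fin.coe_castSucc]
    have hval : AF (DP (p * X i)) q / q
        = (AF (DP p) q / q) * A q (i : ℕ) + AF p q * (A q ((i : ℕ) + 1) / q) := by
      rw [DP_mul_X, AF, map_add, map_mul, map_mul, MvPolynomial.aeval_X, MvPolynomial.aeval_X,
        MvPolynomial.aeval_rename, hcomp, Fin.coe_castSucc, Fin.val_succ]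
      rw [show MvPolynomial.aeval (fun t : Fin (k+1) => A q (t : ℕ)) (DP p) = AF (DP p) q from rfl,
        show MvPolynomial.aeval (fun t : Fin k => A q (t : ℕ)) p = AF p q from rfl]
      field_simp
    rw [hfun, hval]
    exact ih.mul (hasDerivAt_A (i : ℕ) h0 h1)

noncomputable def Qp : (m : ℕ) → MvPolynomial (Fin (m+1)) ℚ
  | 0 => MvPolynomial.X 0
  | m+1 => DP (Qp m) - MvPolynomial.C 3 * MvPolynomial.X 0 * rename Fin.castSucc (Qp m)

lemma Pm_eq : ∀ m : ℕ, ∀ q : ℝ, 0 < q → q < 1 → Pm (m+1) q = AF (Qp m) q := by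
  intro m
  induction m with
  | zero =>
    intro q h0 h1
    show A q 0 = AF (Qp 0) q
    rw [AF, Qp, MvPolynomial.aeval_X]
    rfl
  | succ m ih =>
    intro q h0 h1
    have hev : Pm (m+1) =ᶠ[nhds q] AF (Qp m) :=
      Filter.eventuallyEq_of_mem (isOpen_Ioo.mem_nhds (Set.mem_Ioo.mpr ⟨h0, h1⟩))
        (fun x hx => ih x hx.1 hx.2)
    have htheta : Theta (Pm (m+1)) q = AF (DP (Qp m)) q := by
      rw [Theta, hev.deriv_eq, (hasDerivAt_AF (Qp m) h0 h1).deriv, mul_div_cancel₀ _ h0.ne']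
    have hcomp : ((fun t : Fin (m+2) => A q (t : ℕ)) ∘ Fin.castSucc) = (fun t : Fin (m+1) => A q (t : ℕ)) :=
      funext fun t => by rw [Function.comp_apply, Fin.coe_castSucc]
    have hRHS : AF (Qp (m+1)) q = AF (DP (Qp m)) q - 3 * A q 0 * AF (Qp m) q := by
      show MvPolynomial.aeval (fun t : Fin (m+2) => A q (t:ℕ)) (Qp (m+1)) = _
      rw [show Qp (m+1) = DP (Qp m) - MvPolynomial.C 3 * MvPolynomial.X 0 * rename Fin.castSucc (Qp m) from rfl]
      rw [map_sub, map_mul, map_mul, MvPolynomial.aeval_C, MvPolynomial.aeval_X,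
        MvPolynomial.aeval_rename, hcomp,
        show ((algebraMap ℚ ℝ)) 3 = (3:ℝ) by norm_num,
        show ((0 : Fin (m+2)) : ℕ) = 0 from rfl]
      rfl
    show Theta (Pm (m+1)) q - 3 * A q 0 * Pm (m+1) q = AF (Qp (m+1)) q
    rw [htheta, ih q h0 h1, hRHS]

/-- part 1 of the theorem. -/
lemma part1 : ∀ m : ℕ, 1 ≤ m → ∀ q : ℝ, 0 < q → q < 1 →
    (Theta^[m] P0) q = -3 * P0 q * Pm m q := by
  intro m hm
  induction m, hm using Nat.le_induction with
  | base =>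
    intro q h0 h1
    rw [Function.iterate_one, theta_P0 h0 h1]
    rfl
  | succ m hm ih =>
    intro q h0 h1
    obtain ⟨m', rfl⟩ : ∃ m', m = m' + 1 := ⟨m - 1, by omega⟩
    rw [Function.iterate_succ_apply']
    have hev : Theta^[m'+1] P0 =ᶠ[nhds q] fun x => -3 * P0 x * Pm (m'+1) x :=
      Filter.eventuallyEq_of_mem (isOpen_Ioo.mem_nhds (Set.mem_Ioo.mpr ⟨h0, h1⟩))
        (fun x hx => ih x hx.1 hx.2)
    have hevPm : Pm (m'+1) =ᶠ[nhds q] AF (Qp m') :=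
      Filter.eventuallyEq_of_mem (isOpen_Ioo.mem_nhds (Set.mem_Ioo.mpr ⟨h0, h1⟩))
        (fun x hx => Pm_eq m' x hx.1 hx.2)
    have hPm : HasDerivAt (Pm (m'+1)) (AF (DP (Qp m')) q / q) q :=
      (hasDerivAt_AF (Qp m') h0 h1).congr_of_eventuallyEq hevPm
    have hP0d := hasDerivAt_P0 h0 h1
    have hprod : HasDerivAt (fun x => -3 * P0 x * Pm (m'+1) x)
        (-3 * ((∑' j : ℕ, (-1 : ℝ) ^ j * (2 * (j : ℝ) + 1) *
          (((j * (j + 1) / 2 : ℕ) : ℝ) * q ^ (j * (j + 1) / 2 - 1))) * Pm (m'+1) q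
            + P0 q * (AF (DP (Qp m')) q / q))) q := by
      have := (hP0d.mul hPm).const_mul (-3 : ℝ)
      apply this.congr_of_eventuallyEq
      apply Filter.Eventually.of_forall
      intro x
      simp only [Pi.mul_apply]
      ring
    have hq0 : q * (∑' j : ℕ, (-1 : ℝ) ^ j * (2 * (j : ℝ) + 1) *
        (((j * (j + 1) / 2 : ℕ) : ℝ) * q ^ (j * (j + 1) / 2 - 1))) = -3 * P0 q * A q 0 := by
      rw [← theta_P0 h0 h1, Theta, hP0d.deriv]
    have htheta : Theta (Pm (m'+1)) q = AF (DP (Qp m')) q := by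
      rw [Theta, hevPm.deriv_eq, (hasDerivAt_AF (Qp m') h0 h1).deriv, mul_div_cancel₀ _ h0.ne']
    rw [Theta, hev.deriv_eq, hprod.deriv]
    have hPm2 : Pm (m' + 1 + 1) q = AF (DP (Qp m')) q - 3 * A q 0 * Pm (m'+1) q := by
      show Theta (Pm (m'+1)) q - 3 * A q 0 * Pm (m'+1) q = _
      rw [htheta]
    rw [hPm2]
    have hdiv : q * (P0 q * (AF (DP (Qp m')) q / q)) = P0 q * AF (DP (Qp m')) q := by
      field_simp
    calc q * (-3 * ((∑' j : ℕ, (-1 : ℝ) ^ j * (2 * (j : ℝ) + 1) *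
          (((j * (j + 1) / 2 : ℕ) : ℝ) * q ^ (j * (j + 1) / 2 - 1))) * Pm (m'+1) q
            + P0 q * (AF (DP (Qp m')) q / q)))
        = -3 * ((q * (∑' j : ℕ, (-1 : ℝ) ^ j * (2 * (j : ℝ) + 1) *
            (((j * (j + 1) / 2 : ℕ) : ℝ) * q ^ (j * (j + 1) / 2 - 1)))) * Pm (m'+1) q
              + q * (P0 q * (AF (DP (Qp m')) q / q))) := by ring
      _ = -3 * ((-3 * P0 q * A q 0) * Pm (m'+1) q + P0 q * AF (DP (Qp m')) q) := by
            rw [hq0, hdiv]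
      _ = -3 * P0 q * (AF (DP (Qp m')) q - 3 * A q 0 * Pm (m'+1) q) := by ring

end Jac

theorem stmt12 :
    (∀ m : ℕ, 1 ≤ m → ∀ q : ℝ, 0 < q → q < 1 →
      (Theta^[m] P0) q = -3 * P0 q * Pm m q) ∧
    (∀ m : ℕ, 1 ≤ m → ∃ P : MvPolynomial (Fin m) ℚ,
      ∀ q : ℝ, 0 < q → q < 1 →
        Pm m q = MvPolynomial.aeval (fun t : Fin m => A q (t : ℕ)) P) := by
  constructor
  · exact Jac.part1
  · intro m hm
    obtain ⟨m', rfl⟩ : ∃ m', m = m' + 1 := ⟨m - 1, by omega⟩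
    exact ⟨Jac.Qp m', fun q h0 h1 => Jac.Pm_eq m' q h0 h1⟩
end

section
/- (a) For every integer m≥2, the coefficient of X in the interpolating polynomial p_m of σ_m equals −B_m/m. (b) For every integer n≥2, the coefficient of X² in p_{2n} equals (1/(2n))·Σ_{k=1}^{n−1} B_{2k} B_{2n−2k}/(2n−2k). -/
/-- `σ_i(j) = Σ_{1 ≤ n_1 < ⋯ < n_i ≤ j-1} n_1 ⋯ n_i`, with `σ_0(j) = 1`. -/
def sigmaP (i j : ℕ) : ℚ :=
  ∑ t ∈ (Finset.Icc 1 (j - 1)).powersetCard i, ∏ m ∈ t, (m : ℚ)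

open scoped Polynomial

/-- Power sum polynomial: evaluates at `n` to `∑_{k<n} k^i`. -/
noncomputable def pip (i : ℕ) : ℚ[X] :=
  ∑ r ∈ Finset.range (i + 1),
    Polynomial.C (_root_.bernoulli r * ((i + 1).choose r : ℚ) / (i + 1)) *
      Polynomial.X ^ (i + 1 - r)

lemma pip_eval (i n : ℕ) : (pip i).eval (n : ℚ) = ∑ k ∈ Finset.range n, (k : ℚ) ^ i := by
  rw [_root_.sum_range_pow, pip, Polynomial.eval_finset_sum]
  exact Finset.sum_congr rfl fun r hr => by simp; ring

lemma pip_coeff_zero (i : ℕ) : (pip i).coeff 0 = 0 := by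
  rw [pip, Polynomial.finset_sum_coeff]
  apply Finset.sum_eq_zero; intro r hr
  simp only [Finset.mem_range] at hr
  rw [Polynomial.coeff_C_mul, Polynomial.coeff_X_pow, if_neg (by omega)]; ring

lemma pip_coeff_one (i : ℕ) : (pip i).coeff 1 = _root_.bernoulli i := by
  rw [pip, Polynomial.finset_sum_coeff]
  rw [Finset.sum_eq_single_of_mem i (by simp)]
  · rw [Polynomial.coeff_C_mul, Polynomial.coeff_X_pow, if_pos (by omega),
      Nat.choose_succ_self_right]
    have : ((i : ℚ) + 1) ≠ 0 := by positivity
    push_cast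
    field_simp
  · intro r hr hne
    simp only [Finset.mem_range] at hr
    rw [Polynomial.coeff_C_mul, Polynomial.coeff_X_pow, if_neg (by omega)]; ring

lemma pip_coeff_two (i : ℕ) (hi : 1 ≤ i) :
    (pip i).coeff 2 = _root_.bernoulli (i - 1) * (((i + 1).choose (i - 1) : ℚ) / (i + 1)) := by
  rw [pip, Polynomial.finset_sum_coeff]
  rw [Finset.sum_eq_single_of_mem (i - 1) (by simp only [Finset.mem_range]; omega)]
  · rw [Polynomial.coeff_C_mul, Polynomial.coeff_X_pow, if_pos (by omega)]; ring
  · intro r hr hne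
    simp only [Finset.mem_range] at hr
    rw [Polynomial.coeff_C_mul, Polynomial.coeff_X_pow, if_neg (by omega)]; ring

lemma coeff_one_mul (P Q : ℚ[X]) :
    (P * Q).coeff 1 = P.coeff 0 * Q.coeff 1 + P.coeff 1 * Q.coeff 0 := by
  rw [Polynomial.coeff_mul, Finset.Nat.sum_antidiagonal_eq_sum_range_succ_mk]
  simp [Finset.sum_range_succ]

lemma coeff_two_mul (P Q : ℚ[X]) :
    (P * Q).coeff 2 = P.coeff 0 * Q.coeff 2 + P.coeff 1 * Q.coeff 1 + P.coeff 2 * Q.coeff 0 := by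
  rw [Polynomial.coeff_mul, Finset.Nat.sum_antidiagonal_eq_sum_range_succ_mk]
  simp [Finset.sum_range_succ]
  try ring

lemma bern_odd_zero {n : ℕ} (h : Odd n) (h1 : 1 < n) : _root_.bernoulli n = 0 := by
  rw [bernoulli_eq_bernoulli'_of_ne_one (by omega), bernoulli'_eq_zero_of_odd h h1]

lemma Icc_one_eq_map (N : ℕ) :
    Finset.Icc 1 N = (Finset.univ : Finset (Fin N)).map
      (⟨fun i : Fin N => (i : ℕ) + 1, (add_left_injective 1).comp Fin.val_injective⟩ : Fin N ↪ ℕ) := by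
  ext k
  simp only [Finset.mem_Icc, Finset.mem_map, Finset.mem_univ, true_and,
    Function.Embedding.coeFn_mk]
  constructor
  · rintro ⟨h1, h2⟩; exact ⟨⟨k - 1, by omega⟩, by simp; omega⟩
  · rintro ⟨i, rfl⟩; omega

lemma esymm_eval (N m : ℕ) :
    (MvPolynomial.aeval (fun i : Fin N => ((i : ℕ) : ℚ) + 1))
      (MvPolynomial.esymm (Fin N) ℚ m) = sigmaP m (N + 1) := by
  rw [MvPolynomial.aeval_esymm_eq_multiset_esymm, Finset.esymm_map_val, sigmaP]
  rw [show N + 1 - 1 = N from rfl, Icc_one_eq_map N, Finset.powersetCard_map, Finset.sum_map]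
  refine Finset.sum_congr rfl fun t ht => ?_
  rw [RelEmbedding.coe_toEmbedding, Finset.mapEmbedding_apply, Finset.prod_map]
  simp

lemma psum_eval (N e : ℕ) (he : 1 ≤ e) :
    (MvPolynomial.aeval (fun i : Fin N => ((i : ℕ) : ℚ) + 1))
      (MvPolynomial.psum (Fin N) ℚ e) = ∑ k ∈ Finset.range (N + 1), (k : ℚ) ^ e := by
  rw [MvPolynomial.psum]
  simp only [map_sum, map_pow, MvPolynomial.aeval_X]
  rw [Finset.sum_range_succ', Fin.sum_univ_eq_sum_range (fun i => ((i : ℚ) + 1) ^ e)]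
  simp [zero_pow (by omega : e ≠ 0)]

lemma newton_val (m N : ℕ) (hm : 1 ≤ m) :
    (m : ℚ) * sigmaP m (N + 1) =
      (-1) ^ (m + 1) * ∑ r ∈ Finset.range m,
        (-1) ^ r * sigmaP r (N + 1) * ∑ k ∈ Finset.range (N + 1), (k : ℚ) ^ (m - r) := by
  have h := congrArg (MvPolynomial.aeval (fun i : Fin N => ((i : ℕ) : ℚ) + 1))
    (MvPolynomial.mul_esymm_eq_sum (Fin N) ℚ m)
  simp only [map_mul, map_sum, map_pow, map_neg, map_one, map_natCast, esymm_eval] at h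
  rw [h]
  congr 1
  refine Finset.sum_bij' (fun a _ => a.1) (fun r _ => (r, m - r)) ?_ ?_ ?_ ?_ ?_
  · intro a ha
    simp only [Finset.mem_filter, Finset.HasAntidiagonal.mem_antidiagonal] at ha
    simp only [Finset.mem_range]; omega
  · intro r hr
    simp only [Finset.mem_range] at hr
    simp only [Finset.mem_filter, Finset.HasAntidiagonal.mem_antidiagonal]; omega
  · intro a ha
    simp only [Finset.mem_filter, Finset.HasAntidiagonal.mem_antidiagonal] at ha
    ext <;> simp <;> omega
  · intro r hr; simp
  · intro a ha
    simp only [Finset.mem_filter, Finset.HasAntidiagonal.mem_antidiagonal] at ha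
    rw [psum_eval N a.2 (by omega)]
    have h2 : a.2 = m - a.1 := by omega
    rw [h2]

lemma newton_poly (p : ℕ → ℚ[X])
    (hpval : ∀ n : ℕ, ∀ j : ℕ, 1 ≤ j → (p n).eval (j : ℚ) = sigmaP n j) (m : ℕ) (hm : 1 ≤ m) :
    Polynomial.C (m : ℚ) * p m = Polynomial.C ((-1 : ℚ) ^ (m + 1)) *
      ∑ r ∈ Finset.range m, Polynomial.C ((-1 : ℚ) ^ r) * (p r * pip (m - r)) := by
  apply Polynomial.eq_of_infinite_eval_eq
  have hinj : Function.Injective (fun j : ℕ => ((j + 1 : ℕ) : ℚ)) := by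
    intro a b hab; simpa using hab
  apply Set.Infinite.mono (s := Set.range (fun j : ℕ => ((j + 1 : ℕ) : ℚ)))
  · rintro x ⟨j, rfl⟩
    simp only [Set.mem_setOf_eq]
    rw [Polynomial.eval_mul, Polynomial.eval_C, hpval m (j + 1) (by omega),
      Polynomial.eval_mul, Polynomial.eval_C, Polynomial.eval_finset_sum,
      newton_val m j hm]
    congr 1
    refine Finset.sum_congr rfl fun r hr => ?_
    rw [Polynomial.eval_mul, Polynomial.eval_mul, Polynomial.eval_C,
      hpval r (j + 1) (by omega), pip_eval]
    ring
  · exact Set.infinite_range_of_injective hinj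

theorem stmt16 (p : ℕ → Polynomial ℚ)
    (hpdeg : ∀ n : ℕ, (p n).natDegree ≤ 2 * n)
    (hpval : ∀ n : ℕ, ∀ j : ℕ, 1 ≤ j → (p n).eval (j : ℚ) = sigmaP n j) :
    (∀ m : ℕ, 2 ≤ m → (p m).coeff 1 = -bernoulli m / (m : ℚ)) ∧
    (∀ n : ℕ, 2 ≤ n → (p (2 * n)).coeff 2 =
      (1 / (2 * (n : ℚ))) *
        ∑ k ∈ Finset.Icc 1 (n - 1),
          bernoulli (2 * k) * bernoulli (2 * n - 2 * k) / (2 * (n : ℚ) - 2 * (k : ℚ))) := by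
  have hp0 : p 0 = 1 := by
    have h := Polynomial.eq_C_of_natDegree_le_zero (le_trans (hpdeg 0) (by norm_num))
    have h1 := hpval 0 1 le_rfl
    rw [h] at h1 ⊢
    simp only [Polynomial.eval_C] at h1
    rw [h1]
    simp [sigmaP]
  have hc0 : ∀ m : ℕ, 1 ≤ m → (p m).coeff 0 = 0 := by
    intro m hm
    have h := congrArg (fun q => Polynomial.coeff q 0) (newton_poly p hpval m hm)
    simp only [Polynomial.coeff_C_mul, Polynomial.finset_sum_coeff, Polynomial.mul_coeff_zero,
      pip_coeff_zero, mul_zero, Finset.sum_const_zero, Polynomial.coeff_C_zero] at h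
    have hm' : (m : ℚ) ≠ 0 := Nat.cast_ne_zero.mpr (by omega)
    exact (mul_eq_zero.mp h).resolve_left hm'
  have hc1 : ∀ m : ℕ, 1 ≤ m →
      (p m).coeff 1 = (-1) ^ (m + 1) * _root_.bernoulli m / m := by
    intro m hm
    have h := congrArg (fun q => Polynomial.coeff q 1) (newton_poly p hpval m hm)
    simp only [Polynomial.coeff_C_mul, Polynomial.finset_sum_coeff, coeff_one_mul,
      pip_coeff_zero, pip_coeff_one, mul_zero, add_zero] at h
    rw [Finset.sum_eq_single_of_mem 0 (Finset.mem_range.mpr (by omega))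
      (fun r hr hne => by rw [hc0 r (by omega)]; ring)] at h
    rw [hp0] at h
    simp only [pow_zero, one_mul, Nat.sub_zero, Polynomial.coeff_one_zero] at h
    have hm' : (m : ℚ) ≠ 0 := Nat.cast_ne_zero.mpr (by omega)
    field_simp
    linarith [h]
  constructor
  · intro m hm
    rw [hc1 m (by omega)]
    rcases Nat.even_or_odd m with he | ho
    · obtain ⟨t, ht⟩ := he
      have : (-1 : ℚ) ^ (m + 1) = -1 := Odd.neg_one_pow ⟨t, by omega⟩
      rw [this]; ring
    · rw [bern_odd_zero ho (by omega)]; ring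
  · intro n hn
    have h := congrArg (fun q => Polynomial.coeff q 2)
      (newton_poly p hpval (2 * n) (by omega))
    simp only [Polynomial.coeff_C_mul, Polynomial.finset_sum_coeff, coeff_two_mul,
      pip_coeff_zero, pip_coeff_one, mul_zero, add_zero] at h
    have hodd : (-1 : ℚ) ^ (2 * n + 1) = -1 := Odd.neg_one_pow ⟨n, by ring⟩
    rw [hodd] at h
    have hsum : ∑ r ∈ Finset.range (2 * n), (-1 : ℚ) ^ r *
        ((p r).coeff 0 * (pip (2 * n - r)).coeff 2 + (p r).coeff 1 * _root_.bernoulli (2 * n - r))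
        = -∑ r ∈ Finset.range (2 * n),
            _root_.bernoulli r * _root_.bernoulli (2 * n - r) / r := by
      rw [← Finset.sum_neg_distrib]
      refine Finset.sum_congr rfl fun r hr => ?_
      simp only [Finset.mem_range] at hr
      rcases Nat.eq_zero_or_pos r with rfl | hr1
      · rw [hp0]
        simp only [Nat.sub_zero, pow_zero, one_mul, Polynomial.coeff_one_zero]
        rw [pip_coeff_two (2 * n) (by omega),
          bern_odd_zero (n := 2 * n - 1) ⟨n - 1, by omega⟩ (by omega)]
        simp [Polynomial.coeff_one]
      · rw [hc0 r hr1, hc1 r hr1, zero_mul, zero_add]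
        have hsgn : (-1 : ℚ) ^ r * (-1) ^ (r + 1) = -1 := by
          rw [← pow_add]; exact Odd.neg_one_pow ⟨r, by ring⟩
        rw [show (-1 : ℚ) ^ r * ((-1) ^ (r + 1) * _root_.bernoulli r / (r : ℚ) *
              _root_.bernoulli (2 * n - r)) =
            ((-1 : ℚ) ^ r * (-1) ^ (r + 1)) *
              (_root_.bernoulli r * _root_.bernoulli (2 * n - r) / (r : ℚ)) from by ring, hsgn]
        ring
    rw [hsum] at h
    -- h : (2n : ℚ) * coeff = -(-(∑ ...)) = ∑ ...
    have himg : ∑ r ∈ Finset.range (2 * n),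
        _root_.bernoulli r * _root_.bernoulli (2 * n - r) / r
        = ∑ k ∈ Finset.Icc 1 (n - 1),
            _root_.bernoulli (2 * k) * _root_.bernoulli (2 * n - 2 * k) / ((2 * k : ℕ) : ℚ) := by
      have himg1 : ∑ r ∈ (Finset.Icc 1 (n - 1)).image (fun k => 2 * k),
            _root_.bernoulli r * _root_.bernoulli (2 * n - r) / (r : ℚ)
          = ∑ k ∈ Finset.Icc 1 (n - 1),
            _root_.bernoulli (2 * k) * _root_.bernoulli (2 * n - 2 * k) / ((2 * k : ℕ) : ℚ) :=
        Finset.sum_image (fun x _ y _ hxy => by omega)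
      rw [← himg1]
      symm
      apply Finset.sum_subset
      · intro r hr
        simp only [Finset.mem_image, Finset.mem_Icc] at hr
        obtain ⟨x, ⟨hx1, hx2⟩, rfl⟩ := hr
        simp only [Finset.mem_range]
        omega
      · intro r hr hnot
        simp only [Finset.mem_range] at hr
        simp only [Finset.mem_image, Finset.mem_Icc] at hnot
        push_neg at hnot
        rcases Nat.eq_zero_or_pos r with rfl | hr1
        · simp
        · rcases Nat.even_or_odd r with ⟨t, ht⟩ | hodd'
          · exact absurd (by omega : 2 * t = r) (hnot t ⟨by omega, by omega⟩)
          · rcases Nat.eq_or_lt_of_le hr1 with rfl | hr2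
            · rw [bern_odd_zero (n := 2 * n - 1) ⟨n - 1, by omega⟩ (by omega)]
              ring
            · rw [bern_odd_zero hodd' (by omega)]
              ring
    have hrefl : ∑ k ∈ Finset.Icc 1 (n - 1),
        _root_.bernoulli (2 * k) * _root_.bernoulli (2 * n - 2 * k) / ((2 * k : ℕ) : ℚ)
        = ∑ k ∈ Finset.Icc 1 (n - 1),
            _root_.bernoulli (2 * k) * _root_.bernoulli (2 * n - 2 * k)
              / (2 * (n : ℚ) - 2 * (k : ℚ)) := by
      refine Finset.sum_bij' (fun k _ => n - k) (fun k _ => n - k) ?_ ?_ ?_ ?_ ?_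
      · intro k hk; simp only [Finset.mem_Icc] at hk ⊢; omega
      · intro k hk; simp only [Finset.mem_Icc] at hk ⊢; omega
      · intro k hk; simp only [Finset.mem_Icc] at hk; show n - (n - k) = k; omega
      · intro k hk; simp only [Finset.mem_Icc] at hk; show n - (n - k) = k; omega
      · intro k hk
        simp only [Finset.mem_Icc] at hk
        show _ = _root_.bernoulli (2 * (n - k)) * _root_.bernoulli (2 * n - 2 * (n - k))
          / (2 * (n : ℚ) - 2 * ((n - k : ℕ) : ℚ))
        have e2 : 2 * n - 2 * (n - k) = 2 * k := by omega
        have e1 : 2 * (n - k) = 2 * n - 2 * k := by omega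
        rw [e2, e1]
        rw [Nat.cast_sub (by omega : k ≤ n)]
        push_cast
        ring
    rw [himg, hrefl] at h
    rw [neg_one_mul, neg_neg] at h
    have h2n : ((2 * n : ℕ) : ℚ) = 2 * (n : ℚ) := by push_cast; ring
    rw [h2n] at h
    have hne : (2 * (n : ℚ)) ≠ 0 := by positivity
    rw [← h, one_div, inv_mul_cancel_left₀ hne]
end

section
/- For every real q with 0<q<1, A_3(q) = A_2(q) + 36A_1(q)² − 24A_0(q)A_2(q). -/
open Finset

namespace Stmt18

def Q (n : ℕ) : Finset (ℕ × ℕ × ℕ × ℕ) :=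
  ((range (n+1)) ×ˢ (range (n+1)) ×ˢ (range (n+1)) ×ˢ (range (n+1))).filter
    (fun p => 0 < p.1 ∧ 0 < p.2.1 ∧ 0 < p.2.2.1 ∧ 0 < p.2.2.2 ∧
      p.1 * p.2.2.1 + p.2.1 * p.2.2.2 = n)

lemma mem_Q {n : ℕ} {p : ℕ × ℕ × ℕ × ℕ} :
    p ∈ Q n ↔ 0 < p.1 ∧ 0 < p.2.1 ∧ 0 < p.2.2.1 ∧ 0 < p.2.2.2 ∧
      p.1 * p.2.2.1 + p.2.1 * p.2.2.2 = n := by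
  obtain ⟨a, b, x, y⟩ := p
  simp only [Q, mem_filter, mem_product, mem_range]
  constructor
  · rintro ⟨-, h⟩; exact h
  · rintro ⟨ha, hb, hx, hy, hn⟩
    refine ⟨⟨?_, ?_, ?_, ?_⟩, ha, hb, hx, hy, hn⟩ <;> simp only [Nat.lt_succ_iff] <;> nlinarith


/-- swap symmetry restricted to a filter that swaps accordingly -/
lemma sum_swap_xy (n : ℕ) (f : ℕ × ℕ × ℕ × ℕ → ℝ) :
    ∑ p ∈ (Q n).filter (fun p => p.2.2.1 < p.2.2.2), f p
      = ∑ p ∈ (Q n).filter (fun p => p.2.2.2 < p.2.2.1), f (p.2.1, p.1, p.2.2.2, p.2.2.1) := by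
  refine Finset.sum_nbij' (fun p => (p.2.1, p.1, p.2.2.2, p.2.2.1))
    (fun p => (p.2.1, p.1, p.2.2.2, p.2.2.1)) ?_ ?_ ?_ ?_ ?_
  · rintro ⟨a, b, x, y⟩ hp
    simp only [mem_filter, mem_Q] at hp ⊢
    obtain ⟨⟨h1, h2, h3, h4, h5⟩, h6⟩ := hp
    exact ⟨⟨h2, h1, h4, h3, by linarith⟩, h6⟩
  · rintro ⟨a, b, x, y⟩ hp
    simp only [mem_filter, mem_Q] at hp ⊢
    obtain ⟨⟨h1, h2, h3, h4, h5⟩, h6⟩ := hp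
    exact ⟨⟨h2, h1, h4, h3, by linarith⟩, h6⟩
  · rintro ⟨a, b, x, y⟩ _; rfl
  · rintro ⟨a, b, x, y⟩ _; rfl
  · rintro ⟨a, b, x, y⟩ _; rfl

lemma sum_swap_ab (n : ℕ) (f : ℕ × ℕ × ℕ × ℕ → ℝ) :
    ∑ p ∈ (Q n).filter (fun p => p.1 < p.2.1), f p
      = ∑ p ∈ (Q n).filter (fun p => p.2.1 < p.1), f (p.2.1, p.1, p.2.2.2, p.2.2.1) := by
  refine Finset.sum_nbij' (fun p => (p.2.1, p.1, p.2.2.2, p.2.2.1))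
    (fun p => (p.2.1, p.1, p.2.2.2, p.2.2.1)) ?_ ?_ ?_ ?_ ?_
  · rintro ⟨a, b, x, y⟩ hp
    simp only [mem_filter, mem_Q] at hp ⊢
    obtain ⟨⟨h1, h2, h3, h4, h5⟩, h6⟩ := hp
    exact ⟨⟨h2, h1, h4, h3, by linarith⟩, h6⟩
  · rintro ⟨a, b, x, y⟩ hp
    simp only [mem_filter, mem_Q] at hp ⊢
    obtain ⟨⟨h1, h2, h3, h4, h5⟩, h6⟩ := hp
    exact ⟨⟨h2, h1, h4, h3, by linarith⟩, h6⟩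
  · rintro ⟨a, b, x, y⟩ _; rfl
  · rintro ⟨a, b, x, y⟩ _; rfl
  · rintro ⟨a, b, x, y⟩ _; rfl

/-- trichotomy split of a sum over Q by comparing x and y -/
lemma sum_split (n : ℕ) (g : ℕ × ℕ × ℕ × ℕ → ℕ) (h : ℕ × ℕ × ℕ × ℕ → ℕ)
    (f : ℕ × ℕ × ℕ × ℕ → ℝ) :
    ∑ p ∈ Q n, f p
      = ∑ p ∈ (Q n).filter (fun p => g p < h p), f p
        + ∑ p ∈ (Q n).filter (fun p => g p = h p), f p
        + ∑ p ∈ (Q n).filter (fun p => h p < g p), f p := by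
  rw [← Finset.sum_filter_add_sum_filter_not (Q n) (fun p => g p < h p) f]
  rw [← Finset.sum_filter_add_sum_filter_not ((Q n).filter (fun p => ¬ g p < h p))
      (fun p => g p = h p) f]
  rw [Finset.filter_filter, Finset.filter_filter]
  rw [Finset.filter_congr (fun p _ => show (¬ g p < h p ∧ g p = h p) ↔ g p = h p by omega),
      Finset.filter_congr (fun p _ => show (¬ g p < h p ∧ ¬ g p = h p) ↔ h p < g p by omega)]
  ring


/-- The Liouville bijection: (a,b,x,y) with b<a ↦ (b, a-b, x+y, x), which has y<x. -/
lemma sum_liouville' (n : ℕ) (f : ℕ × ℕ × ℕ × ℕ → ℝ) :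
    ∑ p ∈ (Q n).filter (fun p => p.2.1 < p.1), f (p.2.1, p.1 - p.2.1, p.2.2.1 + p.2.2.2, p.2.2.1)
      = ∑ p ∈ (Q n).filter (fun p => p.2.2.2 < p.2.2.1), f p := by
  refine Finset.sum_nbij' (fun p => (p.2.1, p.1 - p.2.1, p.2.2.1 + p.2.2.2, p.2.2.1))
    (fun p => (p.1 + p.2.1, p.1, p.2.2.2, p.2.2.1 - p.2.2.2)) ?_ ?_ ?_ ?_ ?_
  · rintro ⟨a, b, x, y⟩ hp
    simp only [mem_filter, mem_Q] at hp ⊢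
    obtain ⟨⟨h1, h2, h3, h4, h5⟩, h6⟩ := hp
    refine ⟨⟨h2, by omega, by omega, h3, ?_⟩, by omega⟩
    have hab : b + (a - b) = a := by omega
    calc b * (x + y) + (a - b) * x = (b + (a - b)) * x + b * y := by ring
      _ = n := by rw [hab]; exact h5
  · rintro ⟨a, b, x, y⟩ hp
    simp only [mem_filter, mem_Q] at hp ⊢
    obtain ⟨⟨h1, h2, h3, h4, h5⟩, h6⟩ := hp
    refine ⟨⟨by omega, h1, h4, by omega, ?_⟩, by omega⟩
    have hxy : y + (x - y) = x := by omega
    calc (a + b) * y + a * (x - y) = a * (y + (x - y)) + b * y := by ring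
      _ = n := by rw [hxy]; exact h5
  · rintro ⟨a, b, x, y⟩ hp
    simp only [mem_filter, mem_Q] at hp
    show (b + (a - b), b, x, x + y - x) = (a, b, x, y)
    have e1 : b + (a - b) = a := by omega
    have e2 : x + y - x = y := by omega
    rw [e1, e2]
  · rintro ⟨a, b, x, y⟩ hp
    simp only [mem_filter, mem_Q] at hp
    show (a, a + b - a, y + (x - y), y) = (a, b, x, y)
    have e1 : a + b - a = b := by omega
    have e2 : y + (x - y) = x := by omega
    rw [e1, e2]
  · rintro ⟨a, b, x, y⟩ _; rfl

/-- diagonal x = y reduces to divisor pairs -/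
lemma sum_diag_xy (n : ℕ) (f : ℕ × ℕ × ℕ × ℕ → ℝ) :
    ∑ p ∈ (Q n).filter (fun p => p.2.2.1 = p.2.2.2), f p
      = ∑ de ∈ Nat.divisorsAntidiagonal n, ∑ c ∈ Ico 1 de.1, f (de.1 - c, c, de.2, de.2) := by
  rw [Finset.sum_sigma']
  refine (Finset.sum_nbij' (fun z => (z.1.1 - z.2, z.2, z.1.2, z.1.2))
    (fun p => ⟨(p.1 + p.2.1, p.2.2.1), p.2.1⟩) ?_ ?_ ?_ ?_ ?_).symm
  · rintro ⟨⟨d, e⟩, c⟩ hz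
    simp only [Finset.mem_sigma, Nat.mem_divisorsAntidiagonal, mem_Ico] at hz
    obtain ⟨⟨hde, hn0⟩, hc1, hcd⟩ := hz
    simp only [mem_filter, mem_Q]
    have he : 0 < e := by
      rcases Nat.eq_zero_or_pos e with h | h
      · exfalso; apply hn0; rw [← hde, h, mul_zero]
      · exact h
    refine ⟨⟨by omega, by omega, he, he, ?_⟩, trivial⟩
    have : (d - c) * e + c * e = ((d - c) + c) * e := by ring
    rw [this, Nat.sub_add_cancel (by omega), hde]
  · rintro ⟨a, b, x, y⟩ hp
    simp only [mem_filter, mem_Q] at hp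
    obtain ⟨⟨h1, h2, h3, h4, h5⟩, h6⟩ := hp
    simp only [Finset.mem_sigma, Nat.mem_divisorsAntidiagonal, mem_Ico]
    refine ⟨⟨?_, ?_⟩, by omega, by omega⟩
    · subst h6
      calc (a + b) * x = a * x + b * x := by ring
        _ = n := h5
    · subst h6
      have : 0 < a * x := Nat.mul_pos h1 h3
      omega
  · rintro ⟨⟨d, e⟩, c⟩ hz
    simp only [Finset.mem_sigma, Nat.mem_divisorsAntidiagonal, mem_Ico] at hz
    show (⟨(d - c + c, e), c⟩ : (_ : ℕ × ℕ) × ℕ) = ⟨(d, e), c⟩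
    have e1 : d - c + c = d := by omega
    rw [e1]
  · rintro ⟨a, b, x, y⟩ hp
    simp only [mem_filter, mem_Q] at hp
    show (a + b - b, b, x, x) = (a, b, x, y)
    have e1 : a + b - b = a := by omega
    rw [e1]
    obtain ⟨-, h6⟩ := hp
    rw [h6]
  · rintro ⟨⟨d, e⟩, c⟩ _; rfl


/-- diagonal a = b reduces to divisor pairs -/
lemma sum_diag_ab (n : ℕ) (f : ℕ × ℕ × ℕ × ℕ → ℝ) :
    ∑ p ∈ (Q n).filter (fun p => p.1 = p.2.1), f p
      = ∑ de ∈ Nat.divisorsAntidiagonal n, ∑ c ∈ Ico 1 de.2, f (de.1, de.1, de.2 - c, c) := by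
  rw [Finset.sum_sigma']
  refine (Finset.sum_nbij' (fun z => (z.1.1, z.1.1, z.1.2 - z.2, z.2))
    (fun p => ⟨(p.1, p.2.2.1 + p.2.2.2), p.2.2.2⟩) ?_ ?_ ?_ ?_ ?_).symm
  · rintro ⟨⟨d, e⟩, c⟩ hz
    simp only [Finset.mem_sigma, Nat.mem_divisorsAntidiagonal, mem_Ico] at hz
    obtain ⟨⟨hde, hn0⟩, hc1, hce⟩ := hz
    simp only [mem_filter, mem_Q]
    have hd : 0 < d := by
      rcases Nat.eq_zero_or_pos d with h | h
      · exfalso; apply hn0; rw [← hde, h, zero_mul]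
      · exact h
    refine ⟨⟨hd, hd, by omega, by omega, ?_⟩, trivial⟩
    have : d * (e - c) + d * c = d * ((e - c) + c) := by ring
    rw [this, Nat.sub_add_cancel (by omega), hde]
  · rintro ⟨a, b, x, y⟩ hp
    simp only [mem_filter, mem_Q] at hp
    obtain ⟨⟨h1, h2, h3, h4, h5⟩, h6⟩ := hp
    simp only [Finset.mem_sigma, Nat.mem_divisorsAntidiagonal, mem_Ico]
    refine ⟨⟨?_, ?_⟩, by omega, by omega⟩
    · rw [← h6] at h5
      calc a * (x + y) = a * x + a * y := by ring
        _ = n := h5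
    · rw [← h6] at h5
      have : 0 < a * x := Nat.mul_pos h1 h3
      omega
  · rintro ⟨⟨d, e⟩, c⟩ hz
    simp only [Finset.mem_sigma, Nat.mem_divisorsAntidiagonal, mem_Ico] at hz
    show (⟨(d, e - c + c), c⟩ : (_ : ℕ × ℕ) × ℕ) = ⟨(d, e), c⟩
    have e1 : e - c + c = e := by omega
    rw [e1]
  · rintro ⟨a, b, x, y⟩ hp
    simp only [mem_filter, mem_Q] at hp
    show (a, a, x + y - y, y) = (a, b, x, y)
    have e1 : x + y - y = x := by omega
    rw [e1]
    obtain ⟨-, h6⟩ := hp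
    rw [h6]
  · rintro ⟨⟨d, e⟩, c⟩ _; rfl

/-- Cauchy-type regrouping : product of divisor sums over the antidiagonal equals a sum over Q -/
lemma sum_cauchy (n : ℕ) (F G : ℕ × ℕ → ℝ) :
    ∑ kl ∈ antidiagonal n,
        (∑ dx ∈ Nat.divisorsAntidiagonal kl.1, F dx) * (∑ ey ∈ Nat.divisorsAntidiagonal kl.2, G ey)
      = ∑ p ∈ Q n, F (p.1, p.2.2.1) * G (p.2.1, p.2.2.2) := by
  have h1 : ∀ kl : ℕ × ℕ,
      (∑ dx ∈ Nat.divisorsAntidiagonal kl.1, F dx) * (∑ ey ∈ Nat.divisorsAntidiagonal kl.2, G ey)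
        = ∑ z ∈ Nat.divisorsAntidiagonal kl.1 ×ˢ Nat.divisorsAntidiagonal kl.2, F z.1 * G z.2 := by
    intro kl
    rw [Finset.sum_mul_sum, Finset.sum_product]
  rw [Finset.sum_congr rfl (fun kl _ => h1 kl), Finset.sum_sigma']
  refine Finset.sum_nbij' (fun z => (z.2.1.1, z.2.2.1, z.2.1.2, z.2.2.2))
    (fun p => ⟨(p.1 * p.2.2.1, p.2.1 * p.2.2.2), ((p.1, p.2.2.1), (p.2.1, p.2.2.2))⟩)
    ?_ ?_ ?_ ?_ ?_
  · rintro ⟨⟨k, l⟩, ⟨⟨a, x⟩, ⟨b, y⟩⟩⟩ hz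
    simp only [Finset.mem_sigma, Finset.mem_product, Finset.HasAntidiagonal.mem_antidiagonal,
      Nat.mem_divisorsAntidiagonal] at hz
    obtain ⟨hkl, ⟨hax, hk0⟩, ⟨hby, hl0⟩⟩ := hz
    simp only [mem_Q]
    refine ⟨?_, ?_, ?_, ?_, ?_⟩
    · rcases Nat.eq_zero_or_pos a with h | h
      · exfalso; apply hk0; rw [← hax, h, zero_mul]
      · exact h
    · rcases Nat.eq_zero_or_pos b with h | h
      · exfalso; apply hl0; rw [← hby, h, zero_mul]
      · exact h
    · rcases Nat.eq_zero_or_pos x with h | h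
      · exfalso; apply hk0; rw [← hax, h, mul_zero]
      · exact h
    · rcases Nat.eq_zero_or_pos y with h | h
      · exfalso; apply hl0; rw [← hby, h, mul_zero]
      · exact h
    · rw [hax, hby]; exact hkl
  · rintro ⟨a, b, x, y⟩ hp
    simp only [mem_Q] at hp
    obtain ⟨h1, h2, h3, h4, h5⟩ := hp
    simp only [Finset.mem_sigma, Finset.mem_product, Finset.HasAntidiagonal.mem_antidiagonal,
      Nat.mem_divisorsAntidiagonal]
    exact ⟨h5, ⟨trivial, (Nat.mul_pos h1 h3).ne'⟩, ⟨trivial, (Nat.mul_pos h2 h4).ne'⟩⟩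
  · rintro ⟨⟨k, l⟩, ⟨⟨a, x⟩, ⟨b, y⟩⟩⟩ hz
    simp only [Finset.mem_sigma, Finset.mem_product, Finset.HasAntidiagonal.mem_antidiagonal,
      Nat.mem_divisorsAntidiagonal] at hz
    obtain ⟨hkl, ⟨hax, hk0⟩, ⟨hby, hl0⟩⟩ := hz
    show (⟨(a * x, b * y), ((a, x), (b, y))⟩ : (_ : ℕ × ℕ) × ((ℕ × ℕ) × (ℕ × ℕ))) = ⟨(k, l), ((a, x), (b, y))⟩
    rw [hax, hby]
  · rintro ⟨a, b, x, y⟩ _; rfl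
  · rintro ⟨⟨k, l⟩, ⟨⟨a, x⟩, ⟨b, y⟩⟩⟩ _; rfl


lemma fh1 (d : ℕ) : ∑ c ∈ range d, (c : ℝ) = d^2/2 - d/2 := by
  induction d with
  | zero => simp
  | succ m ih => rw [Finset.sum_range_succ, ih]; push_cast; ring

lemma fh2 (d : ℕ) : ∑ c ∈ range d, (c : ℝ)^2 = d^3/3 - d^2/2 + d/6 := by
  induction d with
  | zero => simp
  | succ m ih => rw [Finset.sum_range_succ, ih]; push_cast; ring

lemma fh3 (d : ℕ) : ∑ c ∈ range d, (c : ℝ)^3 = d^4/4 - d^3/2 + d^2/4 := by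
  induction d with
  | zero => simp
  | succ m ih => rw [Finset.sum_range_succ, ih]; push_cast; ring

lemma sum_Ico_one {f : ℕ → ℝ} (hf : f 0 = 0) (d : ℕ) :
    ∑ c ∈ Ico 1 d, f c = ∑ c ∈ range d, f c := by
  rcases Nat.eq_zero_or_pos d with h | h
  · subst h; simp
  · rw [Finset.range_eq_Ico, Finset.sum_eq_sum_Ico_succ_bot h, hf, zero_add]

/-- inner diagonal sum for F2 -/
lemma diag2 (d e : ℕ) :
    ∑ c ∈ Ico 1 d, (6*(d:ℝ)^2*e^2*c^2 - 8*d*e^2*c^3) = (d:ℝ)^4*e^2 - d^3*e^2 := by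
  rw [sum_Ico_one (by norm_num)]
  rw [Finset.sum_sub_distrib]
  have h2 : ∑ c ∈ range d, (6*(d:ℝ)^2*e^2*c^2) = 6*(d:ℝ)^2*e^2 * ∑ c ∈ range d, (c:ℝ)^2 := by
    rw [Finset.mul_sum]
  have h3 : ∑ c ∈ range d, (8*(d:ℝ)*e^2*c^3) = 8*(d:ℝ)*e^2 * ∑ c ∈ range d, (c:ℝ)^3 := by
    rw [Finset.mul_sum]
  rw [h2, h3, fh2, fh3]
  ring

/-- inner diagonal sum for F3 -/
lemma diag3 (d e : ℕ) :
    ∑ c ∈ Ico 1 e, (2*(d:ℝ)^4*e*c) = (d:ℝ)^4*e^3 - d^4*e^2 := by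
  rw [sum_Ico_one (by norm_num)]
  have h1 : ∑ c ∈ range e, (2*(d:ℝ)^4*e*c) = 2*(d:ℝ)^4*e * ∑ c ∈ range e, (c:ℝ) := by
    rw [Finset.mul_sum]
  rw [h1, fh1]
  ring


noncomputable section

def F2 (p : ℕ × ℕ × ℕ × ℕ) : ℝ :=
  -12*p.1*p.2.1^3*p.2.2.2^2 + 18*p.1^2*p.2.1^2*p.2.2.1*p.2.2.2
    - 12*p.1^2*p.2.1^2*p.2.2.2^2 + 16*p.1*p.2.1^3*p.2.2.1*p.2.2.2 - 2*p.2.1^4*p.2.2.2^2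

def F3 (p : ℕ × ℕ × ℕ × ℕ) : ℝ :=
  2*p.2.1^4*p.2.2.2^2 - 12*p.1*p.2.1^3*p.2.2.2^2 - 16*p.1*p.2.1^3*p.2.2.1*p.2.2.2
    + 18*p.1^2*p.2.1^2*p.2.2.1*p.2.2.2 + 12*p.1^2*p.2.1^2*p.2.2.2^2

def G1 (p : ℕ × ℕ × ℕ × ℕ) : ℝ :=
  12*p.1^3*p.2.1*p.2.2.1^2 + 12*p.1*p.2.1^3*p.2.2.2^2 - 36*p.1^2*p.2.1^2*p.2.2.1*p.2.2.2
    + 12*p.1^2*p.2.1^2*p.2.2.1^2 + 12*p.1^2*p.2.1^2*p.2.2.2^2 - 16*p.1^3*p.2.1*p.2.2.1*p.2.2.2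
    - 16*p.1*p.2.1^3*p.2.2.1*p.2.2.2 + 2*p.1^4*p.2.2.1^2 + 2*p.2.1^4*p.2.2.2^2

lemma core (n : ℕ) :
    ∑ p ∈ Q n, (36*(p.1:ℝ)^2*p.2.1^2*p.2.2.1*p.2.2.2 - 24*p.1*p.2.1^3*p.2.2.2^2)
      = ∑ de ∈ Nat.divisorsAntidiagonal n, ((de.1:ℝ)^4*de.2^3 - de.1^3*de.2^2) := by
  -- φ = F2 + F3 pointwise
  have step0 : ∑ p ∈ Q n, (36*(p.1:ℝ)^2*p.2.1^2*p.2.2.1*p.2.2.2 - 24*p.1*p.2.1^3*p.2.2.2^2)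
      = ∑ p ∈ Q n, F2 p + ∑ p ∈ Q n, F3 p := by
    rw [← Finset.sum_add_distrib]
    refine Finset.sum_congr rfl fun p _ => ?_
    simp only [F2, F3]; ring
  -- split F2 by x vs y
  have stepA := sum_split n (fun p => p.2.2.1) (fun p => p.2.2.2) F2
  -- swap the x<y part
  have stepB := sum_swap_xy n F2
  -- F2 p + F2 (s p) = -(G1 p)   pointwise, so
  have stepC : ∑ p ∈ (Q n).filter (fun p => p.2.2.2 < p.2.2.1), F2 (p.2.1, p.1, p.2.2.2, p.2.2.1)
        + ∑ p ∈ (Q n).filter (fun p => p.2.2.2 < p.2.2.1), F2 p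
      = - ∑ p ∈ (Q n).filter (fun p => p.2.2.2 < p.2.2.1), G1 p := by
    rw [← Finset.sum_add_distrib, ← Finset.sum_neg_distrib]
    refine Finset.sum_congr rfl fun p _ => ?_
    simp only [F2, G1]; ring
  -- Liouville bijection on G1
  have stepD : ∑ p ∈ (Q n).filter (fun p => p.2.2.2 < p.2.2.1), G1 p
      = ∑ p ∈ (Q n).filter (fun p => p.2.1 < p.1),
          G1 (p.2.1, p.1 - p.2.1, p.2.2.1 + p.2.2.2, p.2.2.1) := (sum_liouville' n G1).symm
  -- pointwise on b<a : G1 (b, a-b, x+y, x) = F3 p + F3 (s p)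
  have stepE : ∑ p ∈ (Q n).filter (fun p => p.2.1 < p.1),
          G1 (p.2.1, p.1 - p.2.1, p.2.2.1 + p.2.2.2, p.2.2.1)
      = ∑ p ∈ (Q n).filter (fun p => p.2.1 < p.1), (F3 p + F3 (p.2.1, p.1, p.2.2.2, p.2.2.1)) := by
    refine Finset.sum_congr rfl fun p hp => ?_
    have hba : p.2.1 < p.1 := (Finset.mem_filter.mp hp).2
    obtain ⟨a, b, x, y⟩ := p
    simp only at hba
    simp only [F3, G1]
    have hcast : ((a - b : ℕ) : ℝ) = (a : ℝ) - b := by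
      push_cast [Nat.cast_sub hba.le]; ring
    push_cast [hcast]
    ring
  have stepF : ∑ p ∈ (Q n).filter (fun p => p.2.1 < p.1), (F3 p + F3 (p.2.1, p.1, p.2.2.2, p.2.2.1))
      = ∑ p ∈ (Q n).filter (fun p => p.2.1 < p.1), F3 p
        + ∑ p ∈ (Q n).filter (fun p => p.1 < p.2.1), F3 p := by
    rw [Finset.sum_add_distrib, sum_swap_ab n F3]
  have stepG := sum_split n (fun p => p.1) (fun p => p.2.1) F3
  -- diagonal evaluations
  have stepH : ∑ p ∈ (Q n).filter (fun p => p.2.2.1 = p.2.2.2), F2 p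
      = ∑ de ∈ Nat.divisorsAntidiagonal n, ((de.1:ℝ)^4*de.2^2 - de.1^3*de.2^2) := by
    rw [sum_diag_xy n F2]
    refine Finset.sum_congr rfl fun de _ => ?_
    rw [← diag2 de.1 de.2]
    refine Finset.sum_congr rfl fun c hc => ?_
    have hcd : c < de.1 := (Finset.mem_Ico.mp hc).2
    simp only [F2]
    have hcast : ((de.1 - c : ℕ) : ℝ) = (de.1 : ℝ) - c := by
      push_cast [Nat.cast_sub hcd.le]; ring
    push_cast [hcast]
    ring
  have stepI : ∑ p ∈ (Q n).filter (fun p => p.1 = p.2.1), F3 p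
      = ∑ de ∈ Nat.divisorsAntidiagonal n, ((de.1:ℝ)^4*de.2^3 - de.1^4*de.2^2) := by
    rw [sum_diag_ab n F3]
    refine Finset.sum_congr rfl fun de _ => ?_
    rw [← diag3 de.1 de.2]
    refine Finset.sum_congr rfl fun c hc => ?_
    have hcd : c < de.2 := (Finset.mem_Ico.mp hc).2
    simp only [F3]
    have hcast : ((de.2 - c : ℕ) : ℝ) = (de.2 : ℝ) - c := by
      push_cast [Nat.cast_sub hcd.le]; ring
    push_cast [hcast]
    ring
  have final : ∑ de ∈ Nat.divisorsAntidiagonal n, ((de.1:ℝ)^4*de.2^3 - de.1^3*de.2^2)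
      = ∑ de ∈ Nat.divisorsAntidiagonal n, ((de.1:ℝ)^4*de.2^2 - de.1^3*de.2^2)
        + ∑ de ∈ Nat.divisorsAntidiagonal n, ((de.1:ℝ)^4*de.2^3 - de.1^4*de.2^2) := by
    rw [← Finset.sum_add_distrib]
    refine Finset.sum_congr rfl fun de _ => ?_
    ring
  linarith [step0, stepA, stepB, stepC, stepD, stepE, stepF, stepG, stepH, stepI, final]




def sigmaR (m : ℕ) : ℝ := ∑ d ∈ m.divisors, (d : ℝ)

def cc (i m : ℕ) : ℝ := (m : ℝ)^i * sigmaR m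

lemma cDA (i m : ℕ) :
    cc i m = ∑ z ∈ Nat.divisorsAntidiagonal m, (z.1 : ℝ)^(i+1) * (z.2 : ℝ)^i := by
  have h1 : ∀ z ∈ Nat.divisorsAntidiagonal m,
      (z.1 : ℝ)^(i+1) * (z.2 : ℝ)^i = (m : ℝ)^i * (z.1 : ℝ) := by
    intro z hz
    obtain ⟨hzm, h0⟩ := Nat.mem_divisorsAntidiagonal.mp hz
    have hm : ((z.1 : ℝ) * z.2) = (m : ℝ) := by exact_mod_cast congrArg (Nat.cast (R := ℝ)) hzm
    calc (z.1 : ℝ)^(i+1) * (z.2 : ℝ)^i = ((z.1 : ℝ) * z.2)^i * z.1 := by ring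
      _ = (m : ℝ)^i * z.1 := by rw [hm]
  rw [Finset.sum_congr rfl h1, ← Finset.mul_sum]
  have h2 : ∑ z ∈ Nat.divisorsAntidiagonal m, (z.1 : ℝ)
      = ∑ d ∈ m.divisors, (d : ℝ) := Nat.sum_divisorsAntidiagonal (fun d e => (d : ℝ))
  rw [h2]; rfl

lemma coeff (n : ℕ) :
    cc 3 n - cc 2 n
      = ∑ kl ∈ antidiagonal n, (36 * (cc 1 kl.1 * cc 1 kl.2) - 24 * (cc 0 kl.1 * cc 2 kl.2)) := by
  have e1 : ∑ kl ∈ antidiagonal n, (cc 1 kl.1 * cc 1 kl.2)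
      = ∑ p ∈ Q n, ((p.1:ℝ)^2 * p.2.2.1) * ((p.2.1:ℝ)^2 * p.2.2.2) := by
    calc ∑ kl ∈ antidiagonal n, (cc 1 kl.1 * cc 1 kl.2)
        = ∑ kl ∈ antidiagonal n,
            (∑ dx ∈ Nat.divisorsAntidiagonal kl.1, (dx.1:ℝ)^2 * dx.2^1)
              * (∑ ey ∈ Nat.divisorsAntidiagonal kl.2, (ey.1:ℝ)^2 * ey.2^1) := by
          refine Finset.sum_congr rfl fun kl _ => ?_
          rw [cDA 1 kl.1, cDA 1 kl.2]
      _ = ∑ p ∈ Q n, ((p.1:ℝ)^2 * (p.2.2.1:ℝ)^1) * ((p.2.1:ℝ)^2 * (p.2.2.2:ℝ)^1) :=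
          sum_cauchy n (fun dx => (dx.1:ℝ)^2 * dx.2^1) (fun ey => (ey.1:ℝ)^2 * ey.2^1)
      _ = ∑ p ∈ Q n, ((p.1:ℝ)^2 * p.2.2.1) * ((p.2.1:ℝ)^2 * p.2.2.2) := by
          refine Finset.sum_congr rfl fun p _ => by ring
  have e2 : ∑ kl ∈ antidiagonal n, (cc 0 kl.1 * cc 2 kl.2)
      = ∑ p ∈ Q n, ((p.1:ℝ)) * ((p.2.1:ℝ)^3 * p.2.2.2^2) := by
    calc ∑ kl ∈ antidiagonal n, (cc 0 kl.1 * cc 2 kl.2)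
        = ∑ kl ∈ antidiagonal n,
            (∑ dx ∈ Nat.divisorsAntidiagonal kl.1, (dx.1:ℝ)^1 * dx.2^0)
              * (∑ ey ∈ Nat.divisorsAntidiagonal kl.2, (ey.1:ℝ)^3 * ey.2^2) := by
          refine Finset.sum_congr rfl fun kl _ => ?_
          rw [cDA 0 kl.1, cDA 2 kl.2]
      _ = ∑ p ∈ Q n, ((p.1:ℝ)^1 * (p.2.2.1:ℝ)^0) * ((p.2.1:ℝ)^3 * (p.2.2.2:ℝ)^2) :=
          sum_cauchy n (fun dx => (dx.1:ℝ)^1 * dx.2^0) (fun ey => (ey.1:ℝ)^3 * ey.2^2)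
      _ = ∑ p ∈ Q n, ((p.1:ℝ)) * ((p.2.1:ℝ)^3 * p.2.2.2^2) := by
          refine Finset.sum_congr rfl fun p _ => by ring
  have e3 : ∑ kl ∈ antidiagonal n, (36 * (cc 1 kl.1 * cc 1 kl.2) - 24 * (cc 0 kl.1 * cc 2 kl.2))
      = 36 * ∑ kl ∈ antidiagonal n, (cc 1 kl.1 * cc 1 kl.2)
        - 24 * ∑ kl ∈ antidiagonal n, (cc 0 kl.1 * cc 2 kl.2) := by
    rw [Finset.sum_sub_distrib, Finset.mul_sum, Finset.mul_sum]
  have e4 : cc 3 n - cc 2 n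
      = ∑ de ∈ Nat.divisorsAntidiagonal n, ((de.1:ℝ)^4*de.2^3 - de.1^3*de.2^2) := by
    rw [cDA 3 n, cDA 2 n, ← Finset.sum_sub_distrib]
  have e5 : 36 * ∑ p ∈ Q n, ((p.1:ℝ)^2 * p.2.2.1) * ((p.2.1:ℝ)^2 * p.2.2.2)
        - 24 * ∑ p ∈ Q n, ((p.1:ℝ)) * ((p.2.1:ℝ)^3 * p.2.2.2^2)
      = ∑ p ∈ Q n, (36*(p.1:ℝ)^2*p.2.1^2*p.2.2.1*p.2.2.2 - 24*p.1*p.2.1^3*p.2.2.2^2) := by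
    rw [Finset.sum_sub_distrib, Finset.mul_sum, Finset.mul_sum]
    congr 1
    · exact Finset.sum_congr rfl fun p _ => by ring
    · exact Finset.sum_congr rfl fun p _ => by ring
  rw [e3, e1, e2, e4, e5, core n]


end
end Stmt18

open Stmt18

theorem stmt18 (q : ℝ) (hq0 : 0 < q) (hq1 : q < 1) :
    A q 3 = A q 2 + 36 * (A q 1) ^ 2 - 24 * A q 0 * A q 2 := by
  have hA : ∀ i, A q i = ∑' m : ℕ, cc i m * q ^ m := fun i => rfl
  have hqn : ‖q‖ < 1 := by rw [Real.norm_eq_abs, abs_of_pos hq0]; exact hq1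
  have hccnn : ∀ i m, 0 ≤ cc i m := by
    intro i m
    apply mul_nonneg (by positivity)
    exact Finset.sum_nonneg fun d _ => by positivity
  have hccle : ∀ i m, cc i m ≤ (m : ℝ) ^ (i + 2) := by
    intro i m
    have hσ : sigmaR m ≤ (m : ℝ)^2 := by
      have hsub : m.divisors ⊆ Finset.Ico 1 (m + 1) := by
        intro d hd
        obtain ⟨hdvd, hm0⟩ := Nat.mem_divisors.mp hd
        have hd0 : 0 < d := Nat.pos_of_dvd_of_pos hdvd (Nat.pos_of_ne_zero hm0)
        have hdm : d ≤ m := Nat.le_of_dvd (Nat.pos_of_ne_zero hm0) hdvd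
        exact Finset.mem_Ico.mpr ⟨hd0, by omega⟩
      calc sigmaR m ≤ ∑ d ∈ m.divisors, (m : ℝ) := by
            refine Finset.sum_le_sum fun d hd => ?_
            exact_mod_cast Nat.divisor_le hd
        _ = m.divisors.card * (m : ℝ) := by rw [Finset.sum_const, nsmul_eq_mul]
        _ ≤ (m : ℝ) * m := by
            have hcard : m.divisors.card ≤ m := by
              have := Finset.card_le_card hsub
              simpa [Nat.card_Ico] using this
            have : (m.divisors.card : ℝ) ≤ (m : ℝ) := by exact_mod_cast hcard
            nlinarith [Nat.cast_nonneg (α := ℝ) m]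
        _ = (m : ℝ)^2 := by ring
    calc cc i m = (m : ℝ)^i * sigmaR m := rfl
      _ ≤ (m : ℝ)^i * (m : ℝ)^2 := by
          apply mul_le_mul_of_nonneg_left hσ (by positivity)
      _ = (m : ℝ)^(i + 2) := by rw [pow_add]
  have hnorm : ∀ i, Summable fun m : ℕ => ‖cc i m * q ^ m‖ := by
    intro i
    refine Summable.of_nonneg_of_le (fun m => norm_nonneg _) (fun m => ?_)
      (summable_pow_mul_geometric_of_norm_lt_one (i + 2) hqn)
    rw [Real.norm_eq_abs, abs_of_nonneg (mul_nonneg (hccnn i m) (by positivity))]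
    exact mul_le_mul_of_nonneg_right (hccle i m) (by positivity)
  have hsummable : ∀ i, Summable fun m : ℕ => cc i m * q ^ m := fun i => (hnorm i).of_norm
  -- Cauchy products
  have hP1 : A q 1 * A q 1 = ∑' n : ℕ, ∑ kl ∈ antidiagonal n,
      (cc 1 kl.1 * q ^ kl.1) * (cc 1 kl.2 * q ^ kl.2) := by
    rw [hA 1]
    exact tsum_mul_tsum_eq_tsum_sum_antidiagonal_of_summable_norm (hnorm 1) (hnorm 1)
  have hP2 : A q 0 * A q 2 = ∑' n : ℕ, ∑ kl ∈ antidiagonal n,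
      (cc 0 kl.1 * q ^ kl.1) * (cc 2 kl.2 * q ^ kl.2) := by
    rw [hA 0, hA 2]
    exact tsum_mul_tsum_eq_tsum_sum_antidiagonal_of_summable_norm (hnorm 0) (hnorm 2)
  have hS1 : Summable fun n : ℕ => ∑ kl ∈ antidiagonal n,
      (cc 1 kl.1 * q ^ kl.1) * (cc 1 kl.2 * q ^ kl.2) :=
    (summable_norm_sum_mul_antidiagonal_of_summable_norm (hnorm 1) (hnorm 1)).of_norm
  have hS2 : Summable fun n : ℕ => ∑ kl ∈ antidiagonal n,
      (cc 0 kl.1 * q ^ kl.1) * (cc 2 kl.2 * q ^ kl.2) :=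
    (summable_norm_sum_mul_antidiagonal_of_summable_norm (hnorm 0) (hnorm 2)).of_norm
  -- key per-coefficient identity
  have key : ∀ n : ℕ,
      36 * (∑ kl ∈ antidiagonal n, (cc 1 kl.1 * q ^ kl.1) * (cc 1 kl.2 * q ^ kl.2))
        - 24 * (∑ kl ∈ antidiagonal n, (cc 0 kl.1 * q ^ kl.1) * (cc 2 kl.2 * q ^ kl.2))
      = cc 3 n * q ^ n - cc 2 n * q ^ n := by
    intro n
    have h1 : ∀ i j : ℕ, ∑ kl ∈ antidiagonal n, (cc i kl.1 * q ^ kl.1) * (cc j kl.2 * q ^ kl.2)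
        = (∑ kl ∈ antidiagonal n, cc i kl.1 * cc j kl.2) * q ^ n := by
      intro i j
      rw [Finset.sum_mul]
      refine Finset.sum_congr rfl fun kl hkl => ?_
      have hkln : kl.1 + kl.2 = n := Finset.HasAntidiagonal.mem_antidiagonal.mp hkl
      rw [← hkln, pow_add]
      ring
    rw [h1, h1]
    have h3 := coeff n
    rw [Finset.sum_sub_distrib, ← Finset.mul_sum, ← Finset.mul_sum] at h3
    linear_combination (-(q ^ n)) * h3
  -- assemble
  have lhs_eq : A q 3 - A q 2 = ∑' n : ℕ, (cc 3 n * q ^ n - cc 2 n * q ^ n) := by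
    rw [hA 3, hA 2]
    exact (Summable.tsum_sub (hsummable 3) (hsummable 2)).symm
  have rhs_eq : 36 * (A q 1 * A q 1) - 24 * (A q 0 * A q 2)
      = ∑' n : ℕ, (cc 3 n * q ^ n - cc 2 n * q ^ n) := by
    rw [hP1, hP2, ← tsum_mul_left, ← tsum_mul_left, ← Summable.tsum_sub (hS1.mul_left 36) (hS2.mul_left 24)]
    exact tsum_congr key
  have : A q 3 - A q 2 = 36 * (A q 1 * A q 1) - 24 * (A q 0 * A q 2) := by
    rw [lhs_eq, rhs_eq]
  nlinarith [this]
end
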